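/- arXiv:q-alg/9602033 — 4 statements merged into one kernel-verified Lean document; each statement's English description precedes it below -/
import Mathlib

section
/- Fix 0<q<1 and an integer n ≥ 1. Define the multiple q-gamma function by G_n(z+1;q) := (1-q)^{-binom(z,n)} · ∏_{k=1}^∞ ((1-q^{z+k})/(1-q^k))^{-binom(-k,n-1)} · (1-q^k)^{binom(z-k,n-1)-binom(-k,n-1)}, and G_0(z;q) := (1-q^z)/(1-q). Then the infinite product converges for every real x > 0, and G_n(x+1;q) = G_{n-1}(x;q)·G_n(x;q) for all real x > 0, and G_n(1;q) = 1. -/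
open Filter Topology MeasureTheory

noncomputable section

/-- Generalized binomial coefficient `binom(z,n) = z(z-1)⋯(z-n+1)/n!` (real). -/
def gbinom (z : ℝ) (n : ℕ) : ℝ := (∏ i ∈ Finset.range n, (z - i)) / (n.factorial : ℝ)

/-- The `k`-th factor (for `k ≥ 1`, indexed by `k-1 : ℕ`) of the infinite product defining the
multiple `q`-gamma function `G_n(z+1;q)`, namely
`((1-q^{z+k})/(1-q^k))^{-binom(-k,n-1)} · (1-q^k)^{binom(z-k,n-1) - binom(-k,n-1)}`. -/
def qGammaTerm (n : ℕ) (q z : ℝ) (k : ℕ) : ℝ :=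
  ((1 - q ^ (z + (k : ℝ) + 1)) / (1 - q ^ ((k : ℝ) + 1))) ^ (-gbinom (-((k : ℝ) + 1)) (n - 1)) *
    (1 - q ^ ((k : ℝ) + 1)) ^
      (gbinom (z - ((k : ℝ) + 1)) (n - 1) - gbinom (-((k : ℝ) + 1)) (n - 1))

/-- The multiple `q`-gamma function `G_n(z;q)`: `G_0(z;q) = (1-q^z)/(1-q)` and, for `n ≥ 1`,
`G_n(z+1;q) = (1-q)^{-binom(z,n)} · ∏_{k=1}^∞ qGammaTerm n q z k`. -/
def qMultiGamma (n : ℕ) (q : ℝ) (z : ℝ) : ℝ :=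
  if n = 0 then (1 - q ^ z) / (1 - q)
  else (1 - q) ^ (-gbinom (z - 1) n) * ∏' k : ℕ, qGammaTerm n q (z - 1) k

end

noncomputable section QMGAux

namespace QMGAux

open Real

lemma gbinom_pascal (w : ℝ) (m : ℕ) :
    gbinom (w + 1) (m + 1) = gbinom w (m + 1) + gbinom w m := by
  have hm : (m.factorial : ℝ) ≠ 0 := Nat.cast_ne_zero.mpr m.factorial_ne_zero
  unfold gbinom
  rw [Finset.prod_range_succ' (fun i => w + 1 - (i : ℝ)),
    Finset.prod_range_succ (fun i => w - (i : ℝ))]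
  have h1 : ∀ i ∈ Finset.range m, w + 1 - ((i : ℕ) + 1 : ℕ) = w - (i : ℝ) := by
    intro i _; push_cast; ring
  rw [Finset.prod_congr rfl h1, Nat.factorial_succ]
  push_cast
  field_simp
  ring

lemma gbinom_zero (m : ℕ) : gbinom 0 (m + 1) = 0 := by
  unfold gbinom
  rw [Finset.prod_eq_zero (Finset.mem_range.mpr (Nat.succ_pos m)) (by norm_num)]
  simp

lemma gbinom_deg_zero (z : ℝ) : gbinom z 0 = 1 := by simp [gbinom]

lemma gbinom_one (z : ℝ) : gbinom z 1 = z := by simp [gbinom]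

lemma abs_gbinom_le (z : ℝ) (m : ℕ) : |gbinom z m| ≤ (|z| + m) ^ m := by
  unfold gbinom
  rw [abs_div, Nat.abs_cast]
  have h1 : |∏ i ∈ Finset.range m, (z - (i : ℝ))| ≤ (|z| + m) ^ m := by
    rw [Finset.abs_prod]
    calc ∏ i ∈ Finset.range m, |z - (i : ℝ)|
        ≤ ∏ _i ∈ Finset.range m, (|z| + m) := by
          apply Finset.prod_le_prod (fun i _ => abs_nonneg _)
          intro i hi
          have hi' : (i : ℝ) ≤ m := by exact_mod_cast (Finset.mem_range.mp hi).le
          have h2 : |z - (i : ℝ)| ≤ |z| + |(i : ℝ)| := by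
            simpa [sub_eq_add_neg] using abs_add_le z (-(i : ℝ))
          rw [abs_of_nonneg (show (0:ℝ) ≤ (i:ℝ) from Nat.cast_nonneg i)] at h2
          linarith
      _ = (|z| + m) ^ m := by rw [Finset.prod_const, Finset.card_range]
  have hf : (1 : ℝ) ≤ (m.factorial : ℝ) := by exact_mod_cast m.factorial_pos
  calc |∏ i ∈ Finset.range m, (z - (i : ℝ))| / (m.factorial : ℝ)
      ≤ (|z| + m) ^ m / (m.factorial : ℝ) := by gcongr
    _ ≤ (|z| + m) ^ m := div_le_self (by positivity) hf

lemma abs_log_le {q : ℝ} (hq0 : 0 < q) (hq1 : q < 1) {s : ℝ} (hs : 0 < s) (k : ℕ) :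
    |Real.log (1 - q ^ (s + (k : ℝ)))| ≤ q ^ s / (1 - q ^ s) * q ^ k := by
  have hqs : 0 < q ^ s := Real.rpow_pos_of_pos hq0 s
  have hqs1 : q ^ s < 1 := Real.rpow_lt_one hq0.le hq1 hs
  have hu : q ^ (s + (k : ℝ)) = q ^ s * q ^ k := by
    rw [Real.rpow_add hq0, Real.rpow_natCast]
  have hqk1 : q ^ k ≤ 1 := pow_le_one₀ hq0.le hq1.le
  have hqk0 : 0 < q ^ k := pow_pos hq0 k
  have hu1 : q ^ s * q ^ k ≤ q ^ s := by nlinarith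
  have hu0 : 0 < q ^ s * q ^ k := mul_pos hqs hqk0
  rw [hu]
  have h1 : 0 < 1 - q ^ s * q ^ k := by nlinarith
  have hlog : Real.log (1 - q ^ s * q ^ k) ≤ 0 :=
    Real.log_nonpos (by nlinarith) (by nlinarith)
  rw [abs_of_nonpos hlog, ← Real.log_inv]
  calc Real.log (1 - q ^ s * q ^ k)⁻¹
      ≤ (1 - q ^ s * q ^ k)⁻¹ - 1 := Real.log_le_sub_one_of_pos (by positivity)
    _ = q ^ s * q ^ k / (1 - q ^ s * q ^ k) := by field_simp; ring
    _ ≤ q ^ s * q ^ k / (1 - q ^ s) := by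
        gcongr
    _ = q ^ s / (1 - q ^ s) * q ^ k := by ring

lemma summable_aux {q : ℝ} (hq0 : 0 < q) (hq1 : q < 1) (m : ℕ) :
    Summable (fun k : ℕ => ((k : ℝ) + 1) ^ m * q ^ k) := by
  have h := summable_pow_mul_geometric_of_norm_lt_one (R := ℝ) m
    (r := q) (by rwa [Real.norm_eq_abs, abs_of_pos hq0])
  have h2 := (summable_nat_add_iff 1).mpr h
  have h3 := h2.mul_left q⁻¹
  refine h3.congr fun k => ?_
  have hq : q ≠ 0 := hq0.ne'
  push_cast
  field_simp
  ring

lemma summable_main {q : ℝ} (hq0 : 0 < q) (hq1 : q < 1) (m : ℕ) (c : ℝ) {s : ℝ} (hs : 0 < s) :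
    Summable (fun k : ℕ => gbinom (c - (k : ℝ)) m * Real.log (1 - q ^ (s + (k : ℝ)))) := by
  have hqs : 0 < q ^ s := Real.rpow_pos_of_pos hq0 s
  have hqs1 : q ^ s < 1 := Real.rpow_lt_one hq0.le hq1 hs
  set C := (|c| + m + 1) ^ m * (q ^ s / (1 - q ^ s)) with hC
  apply Summable.of_norm_bounded (g := fun k : ℕ => C * (((k : ℝ) + 1) ^ m * q ^ k))
    ((summable_aux hq0 hq1 m).mul_left C)
  intro k
  rw [Real.norm_eq_abs, abs_mul]
  have h1 : |gbinom (c - (k : ℝ)) m| ≤ (|c| + m + 1) ^ m * ((k : ℝ) + 1) ^ m := by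
    calc |gbinom (c - (k : ℝ)) m| ≤ (|c - (k : ℝ)| + m) ^ m := abs_gbinom_le _ _
      _ ≤ ((|c| + m + 1) * ((k : ℝ) + 1)) ^ m := by
          apply pow_le_pow_left₀ (by positivity)
          have h2 : |c - (k : ℝ)| ≤ |c| + (k : ℝ) := by
            have := abs_add_le c (-(k : ℝ))
            rw [abs_neg, abs_of_nonneg (show (0:ℝ) ≤ (k:ℝ) from Nat.cast_nonneg k)] at this
            simpa [sub_eq_add_neg] using this
          nlinarith [abs_nonneg c, Nat.cast_nonneg (α := ℝ) k]
      _ = (|c| + m + 1) ^ m * ((k : ℝ) + 1) ^ m := mul_pow _ _ _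
  have h2 := abs_log_le hq0 hq1 hs k
  calc |gbinom (c - (k : ℝ)) m| * |Real.log (1 - q ^ (s + (k : ℝ)))|
      ≤ ((|c| + m + 1) ^ m * ((k : ℝ) + 1) ^ m) * (q ^ s / (1 - q ^ s) * q ^ k) :=
        mul_le_mul h1 h2 (abs_nonneg _) (by positivity)
    _ = C * (((k : ℝ) + 1) ^ m * q ^ k) := by rw [hC]; ring

def gf (q : ℝ) (n : ℕ) (z : ℝ) (k : ℕ) : ℝ :=
  -gbinom (-((k : ℝ) + 1)) (n - 1) * Real.log (1 - q ^ (z + (k : ℝ) + 1))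
    + gbinom (z - ((k : ℝ) + 1)) (n - 1) * Real.log (1 - q ^ ((k : ℝ) + 1))

lemma summable_gf {q : ℝ} (hq0 : 0 < q) (hq1 : q < 1) (n : ℕ) {z : ℝ} (hz : -1 < z) :
    Summable (gf q n z) := by
  have h1 := summable_main hq0 hq1 (n - 1) (-1) (s := z + 1) (by linarith)
  have h2 := summable_main hq0 hq1 (n - 1) (z - 1) (s := 1) one_pos
  refine (h1.neg.add h2).congr fun k => ?_
  unfold gf
  have e1 : (-1 : ℝ) - (k : ℝ) = -((k : ℝ) + 1) := by ring
  have e2 : z + 1 + (k : ℝ) = z + (k : ℝ) + 1 := by ring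
  have e3 : z - 1 - (k : ℝ) = z - ((k : ℝ) + 1) := by ring
  have e4 : (1 : ℝ) + (k : ℝ) = (k : ℝ) + 1 := by ring
  simp only [e1, e2, e3, e4]
  ring

lemma qGammaTerm_eq_exp {q : ℝ} (hq0 : 0 < q) (hq1 : q < 1) (n : ℕ) {z : ℝ} (hz : -1 < z)
    (k : ℕ) : qGammaTerm n q z k = Real.exp (gf q n z k) := by
  have hk : (0 : ℝ) ≤ (k : ℝ) := Nat.cast_nonneg k
  have ha : 0 < 1 - q ^ (z + (k : ℝ) + 1) := by
    have : q ^ (z + (k : ℝ) + 1) < 1 := Real.rpow_lt_one hq0.le hq1 (by linarith)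
    linarith
  have hb : 0 < 1 - q ^ ((k : ℝ) + 1) := by
    have : q ^ ((k : ℝ) + 1) < 1 := Real.rpow_lt_one hq0.le hq1 (by linarith)
    linarith
  unfold qGammaTerm gf
  rw [Real.rpow_def_of_pos (div_pos ha hb), Real.rpow_def_of_pos hb,
    Real.log_div ha.ne' hb.ne', ← Real.exp_add]
  congr 1
  ring

lemma hasProd_qGammaTerm {q : ℝ} (hq0 : 0 < q) (hq1 : q < 1) (n : ℕ) {z : ℝ} (hz : -1 < z) :
    HasProd (qGammaTerm n q z) (Real.exp (∑' k : ℕ, gf q n z k)) := by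
  have h := (summable_gf hq0 hq1 n hz).hasSum.rexp
  have he : qGammaTerm n q z = Real.exp ∘ gf q n z :=
    funext fun k => qGammaTerm_eq_exp hq0 hq1 n hz k
  rw [he]
  exact h

lemma tprod_eq_exp {q : ℝ} (hq0 : 0 < q) (hq1 : q < 1) (n : ℕ) {z : ℝ} (hz : -1 < z) :
    ∏' k : ℕ, qGammaTerm n q z k = Real.exp (∑' k : ℕ, gf q n z k) :=
  (hasProd_qGammaTerm hq0 hq1 n hz).tprod_eq

lemma telescope {q : ℝ} (hq0 : 0 < q) (hq1 : q < 1) (m : ℕ) {x : ℝ} (hx : 0 < x) :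
    HasSum
      (fun k : ℕ => gbinom (-(k : ℝ)) m * Real.log (1 - q ^ (x + (k : ℝ)))
        - gbinom (-((k : ℝ) + 1)) m * Real.log (1 - q ^ (x + (k : ℝ) + 1)))
      (gbinom 0 m * Real.log (1 - q ^ x)) := by
  set F : ℕ → ℝ := fun k => gbinom (-(k : ℝ)) m * Real.log (1 - q ^ (x + (k : ℝ))) with hF
  have hFs : Summable F := by
    refine (summable_main hq0 hq1 m 0 hx).congr fun k => ?_
    simp [hF, zero_sub]
  have hFs1 : Summable (fun k => F (k + 1)) := (summable_nat_add_iff 1).mpr hFs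
  have key : HasSum (fun k => F k - F (k + 1)) (F 0) := by
    have h := hFs.hasSum.sub hFs1.hasSum
    have hv : (∑' k, F k) - ∑' k, F (k + 1) = F 0 := by
      rw [Summable.tsum_eq_zero_add hFs]; ring
    rwa [hv] at h
  have hF0v : F 0 = gbinom 0 m * Real.log (1 - q ^ x) := by
    simp [hF]
  rw [← hF0v]
  have hfe : (fun k : ℕ => gbinom (-(k : ℝ)) m * Real.log (1 - q ^ (x + (k : ℝ)))
      - gbinom (-((k : ℝ) + 1)) m * Real.log (1 - q ^ (x + (k : ℝ) + 1)))
      = fun k => F k - F (k + 1) := by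
    funext k
    simp only [hF]
    push_cast
    rw [show x + ((k : ℝ) + 1) = x + (k : ℝ) + 1 from by ring]
  rw [hfe]
  exact key

lemma pointwise2 (q : ℝ) (m : ℕ) (x : ℝ) (k : ℕ) :
    gf q (m + 2) x k - gf q (m + 2) (x - 1) k - gf q (m + 1) (x - 1) k
      = gbinom (-(k : ℝ)) (m + 1) * Real.log (1 - q ^ (x + (k : ℝ)))
        - gbinom (-((k : ℝ) + 1)) (m + 1) * Real.log (1 - q ^ (x + (k : ℝ) + 1)) := by
  unfold gf
  simp only [show m + 2 - 1 = m + 1 from rfl, show m + 1 - 1 = m from rfl]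
  have e1 : x - 1 + (k : ℝ) + 1 = x + (k : ℝ) := by ring
  rw [e1]
  have e2 : x - 1 - ((k : ℝ) + 1) = x - ((k : ℝ) + 1) - 1 := by ring
  rw [e2]
  have p1 : gbinom (x - ((k : ℝ) + 1)) (m + 1)
      = gbinom (x - ((k : ℝ) + 1) - 1) (m + 1) + gbinom (x - ((k : ℝ) + 1) - 1) m := by
    have h := gbinom_pascal (x - ((k : ℝ) + 1) - 1) m
    rwa [show x - ((k : ℝ) + 1) - 1 + 1 = x - ((k : ℝ) + 1) from by ring] at h
  have p2 : gbinom (-(k : ℝ)) (m + 1)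
      = gbinom (-((k : ℝ) + 1)) (m + 1) + gbinom (-((k : ℝ) + 1)) m := by
    have h := gbinom_pascal (-((k : ℝ) + 1)) m
    rwa [show -((k : ℝ) + 1) + 1 = -(k : ℝ) from by ring] at h
  rw [p1, p2]
  ring

lemma pointwise1 (q : ℝ) (x : ℝ) (k : ℕ) :
    gf q 1 x k - gf q 1 (x - 1) k
      = gbinom (-(k : ℝ)) 0 * Real.log (1 - q ^ (x + (k : ℝ)))
        - gbinom (-((k : ℝ) + 1)) 0 * Real.log (1 - q ^ (x + (k : ℝ) + 1)) := by
  unfold gf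
  simp only [Nat.sub_self, gbinom_deg_zero]
  have e1 : x - 1 + (k : ℝ) + 1 = x + (k : ℝ) := by ring
  rw [e1]
  ring

end QMGAux

end QMGAux

noncomputable section

/-- For `0 < q < 1` and `n ≥ 1`, the infinite product defining the multiple `q`-gamma function
`G_n(x+1;q)` converges for every real `x > 0`; moreover `G_n(x+1;q) = G_{n-1}(x;q)·G_n(x;q)` for
all real `x > 0`, and `G_n(1;q) = 1`. -/
theorem qMultiGamma_multipliable_funEq_and_one (q : ℝ) (hq0 : 0 < q) (hq1 : q < 1)
    (n : ℕ) (hn : 1 ≤ n) :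
    (∀ x : ℝ, 0 < x → Multipliable (qGammaTerm n q x)) ∧
    (∀ x : ℝ, 0 < x → qMultiGamma n q (x + 1) = qMultiGamma (n - 1) q x * qMultiGamma n q x) ∧
    qMultiGamma n q 1 = 1 := by
  have hq : 0 < 1 - q := by linarith
  have eP : ∀ j : ℕ, j ≠ 0 → ∀ y : ℝ, qMultiGamma j q y
      = (1 - q) ^ (-gbinom (y - 1) j) * ∏' k : ℕ, qGammaTerm j q (y - 1) k := by
    intro j hj y
    unfold qMultiGamma
    rw [if_neg hj]
  have e0 : ∀ y : ℝ, qMultiGamma 0 q y = (1 - q ^ y) / (1 - q) := by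
    intro y; unfold qMultiGamma; rw [if_pos rfl]
  obtain ⟨m, rfl⟩ : ∃ m, n = m + 1 := ⟨n - 1, (Nat.succ_pred_eq_of_pos hn).symm⟩
  refine ⟨fun x hx =>
    (QMGAux.hasProd_qGammaTerm hq0 hq1 (m + 1) (show (-1 : ℝ) < x by linarith)).multipliable,
    ?_, ?_⟩
  · intro x hx
    have hx1 : (-1 : ℝ) < x := by linarith
    have hx2 : (-1 : ℝ) < x - 1 := by linarith
    have hqx : 0 < 1 - q ^ x := by
      have : q ^ x < 1 := Real.rpow_lt_one hq0.le hq1 hx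
      linarith
    cases m with
    | zero =>
      show qMultiGamma 1 q (x + 1) = qMultiGamma 0 q x * qMultiGamma 1 q x
      rw [eP 1 one_ne_zero, eP 1 one_ne_zero, e0]
      rw [show x + 1 - 1 = x from by ring]
      rw [QMGAux.tprod_eq_exp hq0 hq1 1 hx1, QMGAux.tprod_eq_exp hq0 hq1 1 hx2]
      rw [Real.rpow_def_of_pos hq, Real.rpow_def_of_pos hq]
      rw [show (1 - q ^ x) / (1 - q)
          = Real.exp (Real.log (1 - q ^ x) - Real.log (1 - q)) from by
        rw [Real.exp_sub, Real.exp_log hqx, Real.exp_log hq]]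
      rw [← Real.exp_add, ← Real.exp_add, ← Real.exp_add, Real.exp_eq_exp]
      have hS1 := QMGAux.summable_gf hq0 hq1 1 hx1 (q := q)
      have hS2 := QMGAux.summable_gf hq0 hq1 1 hx2 (q := q)
      have htel := QMGAux.telescope hq0 hq1 0 hx (q := q)
      have hsum : HasSum (fun k => QMGAux.gf q 1 x k - QMGAux.gf q 1 (x - 1) k)
          (gbinom 0 0 * Real.log (1 - q ^ x)) := by
        rw [funext (QMGAux.pointwise1 q x)]
        exact htel
      rw [QMGAux.gbinom_deg_zero, one_mul] at hsum
      have heq : (∑' k, QMGAux.gf q 1 x k) - ∑' k, QMGAux.gf q 1 (x - 1) k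
          = Real.log (1 - q ^ x) := by
        rw [← Summable.tsum_sub hS1 hS2]
        exact hsum.tsum_eq
      rw [QMGAux.gbinom_one, QMGAux.gbinom_one]
      linear_combination heq
    | succ m' =>
      show qMultiGamma (m' + 2) q (x + 1)
          = qMultiGamma (m' + 1) q x * qMultiGamma (m' + 2) q x
      rw [eP (m' + 2) (by omega), eP (m' + 2) (by omega), eP (m' + 1) (by omega)]
      rw [show x + 1 - 1 = x from by ring]
      rw [QMGAux.tprod_eq_exp hq0 hq1 (m' + 2) hx1, QMGAux.tprod_eq_exp hq0 hq1 (m' + 2) hx2,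
        QMGAux.tprod_eq_exp hq0 hq1 (m' + 1) hx2]
      rw [Real.rpow_def_of_pos hq, Real.rpow_def_of_pos hq, Real.rpow_def_of_pos hq]
      rw [← Real.exp_add, ← Real.exp_add, ← Real.exp_add, ← Real.exp_add, Real.exp_eq_exp]
      have hS1 := QMGAux.summable_gf hq0 hq1 (m' + 2) hx1 (q := q)
      have hS2 := QMGAux.summable_gf hq0 hq1 (m' + 2) hx2 (q := q)
      have hS3 := QMGAux.summable_gf hq0 hq1 (m' + 1) hx2 (q := q)
      have htel := QMGAux.telescope hq0 hq1 (m' + 1) hx (q := q)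
      have hsum : HasSum (fun k => QMGAux.gf q (m' + 2) x k - QMGAux.gf q (m' + 2) (x - 1) k
            - QMGAux.gf q (m' + 1) (x - 1) k)
          (gbinom 0 (m' + 1) * Real.log (1 - q ^ x)) := by
        rw [funext (QMGAux.pointwise2 q m' x)]
        exact htel
      rw [QMGAux.gbinom_zero, zero_mul] at hsum
      have heq : (∑' k, QMGAux.gf q (m' + 2) x k) - (∑' k, QMGAux.gf q (m' + 2) (x - 1) k)
          - ∑' k, QMGAux.gf q (m' + 1) (x - 1) k = 0 := by
        rw [← Summable.tsum_sub hS1 hS2, ← Summable.tsum_sub (hS1.sub hS2) hS3]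
        exact hsum.tsum_eq
      have hpas : gbinom x (m' + 2) = gbinom (x - 1) (m' + 2) + gbinom (x - 1) (m' + 1) := by
        have h := QMGAux.gbinom_pascal (x - 1) (m' + 1)
        rwa [show x - 1 + 1 = x from by ring] at h
      linear_combination heq - Real.log (1 - q) * hpas
  · rw [eP (m + 1) (by omega)]
    rw [show (1 : ℝ) - 1 = 0 from by ring, QMGAux.gbinom_zero, neg_zero, Real.rpow_zero, one_mul]
    have h1 : ∀ k : ℕ, qGammaTerm (m + 1) q 0 k = 1 := by
      intro k
      unfold qGammaTerm
      have hb : (1 - q ^ ((k : ℝ) + 1)) ≠ 0 := by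
        have : q ^ ((k : ℝ) + 1) < 1 := Real.rpow_lt_one hq0.le hq1 (by positivity)
        linarith
      rw [show (0 : ℝ) + (k : ℝ) + 1 = (k : ℝ) + 1 from by ring, div_self hb, Real.one_rpow,
        show (0 : ℝ) - ((k : ℝ) + 1) = -((k : ℝ) + 1) from by ring, sub_self, Real.rpow_zero,
        one_mul]
    rw [tprod_congr h1, tprod_one]

end
end

section
/- Fix 0<q<1 and an integer n ≥ 1, and let G_n(·;q) be the multiple q-gamma function defined by G_n(z+1;q) := (1-q)^{-binom(z,n)} · ∏_{k=1}^∞ ((1-q^{z+k})/(1-q^k))^{-binom(-k,n-1)} · (1-q^k)^{binom(z-k,n-1)-binom(-k,n-1)}. Then the function x ↦ log G_n(x+1;q) is (n+1)-times differentiable on (0,∞) and its (n+1)-st derivative satisfies (d/dx)^{n+1} log G_n(x+1;q) ≥ 0 for all real x ≥ 0. -/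
open Filter Topology MeasureTheory

noncomputable section
open Polynomial Set
namespace QMG



lemma summable_poly_geom (d : ℕ) {r : ℝ} (h0 : 0 ≤ r) (h1 : r < 1) :
    Summable (fun k : ℕ => ((k : ℝ) + 1) ^ d * r ^ k) := by
  rcases eq_or_lt_of_le h0 with h | h
  · apply summable_of_ne_finset_zero (s := ({0} : Finset ℕ))
    intro k hk
    simp only [Finset.mem_singleton] at hk
    rw [← h, zero_pow hk, mul_zero]
  · have H : Summable (fun k : ℕ => ((k : ℝ)) ^ d * r ^ k) :=
      summable_pow_mul_geometric_of_norm_lt_one d (by rwa [Real.norm_eq_abs, abs_of_pos h])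
    have H3 := ((summable_nat_add_iff 1).2 H).mul_left r⁻¹
    apply H3.congr
    intro k
    push_cast
    field_simp
    ring

def Dk (n : ℕ) (k : ℕ) : ℝ :=
  (∏ i ∈ Finset.range (n - 1), ((k : ℝ) + 1 + (i : ℝ))) / ((n - 1).factorial : ℝ)

def cc (q : ℝ) (n : ℕ) (p : ℕ × ℕ) : ℝ :=
  (-1) ^ (n + 1) *
    (Dk n p.1 * Real.exp (((p.2 : ℝ) + 1) * (((p.1 : ℝ) + 1) * Real.log q)) / ((p.2 : ℝ) + 1))

def mu (p : ℕ × ℕ) : ℝ := (p.2 : ℝ) + 1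

lemma Dk_pos (n k : ℕ) : 0 < Dk n k := by
  apply div_pos (Finset.prod_pos fun i _ => by positivity)
  exact_mod_cast (n - 1).factorial_pos

lemma Dk_le (n k : ℕ) : Dk n k ≤ ((k : ℝ) + n) ^ (n - 1) := by
  have hP : (0:ℝ) ≤ ∏ i ∈ Finset.range (n-1), ((k:ℝ) + 1 + (i:ℝ)) :=
    Finset.prod_nonneg fun i _ => by positivity
  have h1 : (1:ℝ) ≤ ((n-1).factorial : ℝ) := Nat.one_le_cast.2 (n-1).factorial_pos
  calc Dk n k ≤ ∏ i ∈ Finset.range (n-1), ((k:ℝ) + 1 + (i:ℝ)) := div_le_self hP h1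
    _ ≤ ∏ _i ∈ Finset.range (n-1), ((k:ℝ) + n) := by
        apply Finset.prod_le_prod (fun i _ => by positivity)
        intro i hi
        rw [Finset.mem_range] at hi
        have h2 : (i:ℕ) + 1 ≤ n := by omega
        have h3 : (i:ℝ) + 1 ≤ (n:ℝ) := by exact_mod_cast h2
        linarith
    _ = ((k:ℝ) + n) ^ (n - 1) := by rw [Finset.prod_const, Finset.card_range]

lemma hsm_main (q : ℝ) (n : ℕ) (hq0 : 0 < q) (hq1 : q < 1) (hn : 1 ≤ n) (j : ℕ) :
    Summable (fun i : ℕ × ℕ =>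
      |cc q n i| * mu i ^ j * Real.exp (mu i * Real.log q * (-(1/2)))) := by
  set L := Real.log q with hLdef
  have hL : L < 0 := Real.log_neg hq0 hq1
  have hq : Real.exp L = q := Real.exp_log hq0
  have hr1 : Real.exp (L/2) < 1 := by
    rw [← Real.exp_zero]
    exact Real.exp_lt_exp.2 (by linarith)
  have S1 : Summable (fun k : ℕ => ((k:ℝ) + n) ^ (n-1) * q ^ k) := by
    apply Summable.of_nonneg_of_le (fun k => by positivity) ?_
      ((summable_poly_geom (n-1) hq0.le hq1).mul_left ((n:ℝ)^(n-1)))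
    intro k
    rw [show (n:ℝ)^(n-1) * (((k:ℝ)+1)^(n-1) * q^k) = ((n:ℝ)*((k:ℝ)+1))^(n-1) * q^k by
      rw [mul_pow]; ring]
    have h1 : (1:ℝ) ≤ n := Nat.one_le_cast.2 hn
    have h2 : (k:ℝ) + n ≤ (n:ℝ) * ((k:ℝ)+1) := by nlinarith [Nat.cast_nonneg (α := ℝ) k]
    gcongr
  have S2 : Summable (fun m : ℕ => ((m:ℝ)+1)^j * Real.exp (L/2) ^ m) :=
    summable_poly_geom j (Real.exp_nonneg _) hr1
  apply Summable.of_nonneg_of_le (fun i => mul_nonneg (mul_nonneg (abs_nonneg _)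
      (pow_nonneg (by simp [mu]; positivity) j)) (Real.exp_nonneg _)) ?_
    (S1.mul_of_nonneg S2 (fun k => by positivity) (fun m => by positivity))
  rintro ⟨k, m⟩
  have hDpos := Dk_pos n k
  have hDle := Dk_le n k
  have hcc : |cc q n (k,m)| =
      Dk n k * Real.exp (((m:ℝ)+1) * (((k:ℝ)+1) * L)) / ((m:ℝ)+1) := by
    rw [cc, abs_mul, abs_pow, abs_neg, abs_one, one_pow, one_mul, abs_of_pos (by positivity)]
  have hexp : Real.exp (((m:ℝ)+1) * (((k:ℝ)+1) * L)) * Real.exp (((m:ℝ)+1) * L * (-(1/2)))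
      ≤ q ^ k * Real.exp (L/2) ^ m := by
    rw [← Real.exp_add,
      show ((m:ℝ)+1) * (((k:ℝ)+1) * L) + ((m:ℝ)+1) * L * (-(1/2))
        = (((m:ℝ)+1) * ((k:ℝ)+1/2)) * L by ring]
    have h2 : (((m:ℝ)+1) * ((k:ℝ)+1/2)) * L ≤ ((k:ℝ) + (m:ℝ)/2) * L := by
      apply mul_le_mul_of_nonpos_right ?_ hL.le
      nlinarith [Nat.cast_nonneg (α := ℝ) k, Nat.cast_nonneg (α := ℝ) m]
    calc Real.exp ((((m:ℝ)+1) * ((k:ℝ)+1/2)) * L) ≤ Real.exp (((k:ℝ)+(m:ℝ)/2)*L) :=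
          Real.exp_le_exp.2 h2
      _ = Real.exp L ^ k * Real.exp (L/2) ^ m := by
          rw [show ((k:ℝ)+(m:ℝ)/2)*L = (k:ℝ)*L + (m:ℝ)*(L/2) by ring, Real.exp_add,
            ← Real.exp_nat_mul, ← Real.exp_nat_mul]
      _ = q ^ k * Real.exp (L/2) ^ m := by rw [hq]
  show |cc q n (k,m)| * mu (k,m) ^ j * Real.exp (mu (k,m) * L * (-(1/2))) ≤ _
  rw [hcc]
  have hmuval : mu (k,m) = (m:ℝ)+1 := rfl
  rw [hmuval]
  have hdiv : ((m:ℝ)+1)^j / ((m:ℝ)+1) ≤ ((m:ℝ)+1)^j :=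
    div_le_self (by positivity) (by nlinarith [Nat.cast_nonneg (α := ℝ) m])
  calc Dk n k * Real.exp (((m:ℝ)+1) * (((k:ℝ)+1) * L)) / ((m:ℝ)+1) * ((m:ℝ)+1)^j *
        Real.exp (((m:ℝ)+1) * L * (-(1/2)))
      = (Dk n k * (((m:ℝ)+1)^j / ((m:ℝ)+1))) *
        (Real.exp (((m:ℝ)+1) * (((k:ℝ)+1) * L)) * Real.exp (((m:ℝ)+1) * L * (-(1/2)))) := by
        ring
    _ ≤ (((k:ℝ)+n)^(n-1) * ((m:ℝ)+1)^j) * (q ^ k * Real.exp (L/2) ^ m) := by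
        apply mul_le_mul ?_ hexp (by positivity) (by positivity)
        exact mul_le_mul hDle hdiv (by positivity) (by positivity)
    _ = (((k:ℝ)+n)^(n-1) * q ^ k) * (((m:ℝ)+1)^j * Real.exp (L/2) ^ m) := by ring



lemma abs_log_one_sub_le {t : ℝ} (h0 : 0 ≤ t) (h1 : t < 1) :
    |Real.log (1 - t)| ≤ t / (1 - t) := by
  have ht : 0 < 1 - t := by linarith
  rw [abs_of_nonpos (Real.log_nonpos (by linarith) (by linarith))]
  have h2 : Real.log ((1 - t)⁻¹) ≤ (1 - t)⁻¹ - 1 := Real.log_le_sub_one_of_pos (inv_pos.2 ht)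
  rw [Real.log_inv] at h2
  have h3 : (1 - t)⁻¹ - 1 = t / (1 - t) := by field_simp; ring
  linarith

lemma summable_shift_pow_geom (d : ℕ) {r : ℝ} (h0 : 0 ≤ r) (h1 : r < 1) (B : ℝ) (hB : 0 ≤ B) :
    Summable (fun k : ℕ => ((k:ℝ) + B) ^ d * r ^ k) := by
  apply Summable.of_nonneg_of_le (fun k => by positivity) ?_
    ((summable_poly_geom d h0 h1).mul_left ((B+1)^d))
  intro k
  rw [show (B+1)^d * (((k:ℝ)+1)^d * r^k) = ((B+1)*((k:ℝ)+1))^d * r^k by rw [mul_pow]; ring]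
  have h2 : (k:ℝ) + B ≤ (B+1)*((k:ℝ)+1) := by nlinarith [Nat.cast_nonneg (α := ℝ) k]
  gcongr

lemma coeff_prod_bound (c : ℕ → ℝ) (A : ℝ) (hA : 0 ≤ A) :
    ∀ m : ℕ, (∀ i, i < m → |c i| ≤ A) →
      ∀ j, |(∏ i ∈ Finset.range m, (X - C (c i))).coeff j| ≤ (1 + A) ^ m := by
  intro m
  induction m with
  | zero =>
    intro _ j
    simp only [Finset.range_zero, Finset.prod_empty, Polynomial.coeff_one]
    split_ifs <;> simp
  | succ m ih =>
    intro hc j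
    have hp := ih (fun i hi => hc i (hi.trans (Nat.lt_succ_self m)))
    rw [Finset.prod_range_succ, mul_sub, Polynomial.coeff_sub, Polynomial.coeff_mul_C]
    have hB : (0:ℝ) ≤ (1 + A) ^ m := by positivity
    have hcm : |c m| ≤ A := hc m (Nat.lt_succ_self m)
    have key : ∀ u v : ℝ, |u| ≤ (1+A)^m → |v| ≤ (1+A)^m → |u - v * c m| ≤ (1 + A) ^ (m+1) := by
      intro u v hu hv
      have h1 : |u - v * c m| ≤ |u| + |v| * |c m| := by
        rw [← abs_mul]; exact abs_sub _ _
      calc |u - v * c m| ≤ |u| + |v| * |c m| := h1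
          _ ≤ (1+A)^m + (1+A)^m * A := by gcongr
          _ = (1+A)^(m+1) := by ring
    cases j with
    | zero =>
      rw [Polynomial.coeff_mul_X_zero]
      exact key 0 _ (by simpa using hB) (hp 0)
    | succ j =>
      rw [Polynomial.coeff_mul_X]
      exact key _ _ (hp j) (hp (j+1))

variable (q : ℝ) (n : ℕ)

def Qk (k : ℕ) : Polynomial ℝ :=
  C (Real.log (1 - q ^ ((k : ℝ) + 1)) / ((n - 1).factorial : ℝ)) *
    ∏ i ∈ Finset.range (n - 1), (X - C ((k : ℝ) + 1 + (i : ℝ)))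

def Ppoly : Polynomial ℝ := ∑ j ∈ Finset.range n, C (∑' k : ℕ, (Qk q n k).coeff j) * X ^ j

def PAp : Polynomial ℝ :=
  C (-Real.log (1 - q) / (n.factorial : ℝ)) * ∏ i ∈ Finset.range n, (X - C (i : ℝ))

def Ptot : Polynomial ℝ := PAp q n + Ppoly q n

variable {q n}

lemma Qk_natDegree_lt (hn : 1 ≤ n) (k : ℕ) : (Qk q n k).natDegree < n := by
  have h1 := Polynomial.natDegree_C_mul_le
    (Real.log (1 - q ^ ((k : ℝ) + 1)) / ((n - 1).factorial : ℝ))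
    (∏ i ∈ Finset.range (n - 1), (X - C ((k : ℝ) + 1 + (i : ℝ))))
  have h2 := Polynomial.natDegree_prod_le (Finset.range (n-1))
    (fun i => (X - C ((k : ℝ) + 1 + (i : ℝ))))
  have h3 : ∑ i ∈ Finset.range (n-1),
      (X - C ((k : ℝ) + 1 + (i : ℝ))).natDegree = n - 1 := by
    simp only [Polynomial.natDegree_X_sub_C]
    simp
  rw [Qk]
  omega

lemma Qk_coeff_summable (hq0 : 0 < q) (hq1 : q < 1) (hn : 1 ≤ n) (j : ℕ) :
    Summable (fun k : ℕ => (Qk q n k).coeff j) := by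
  have h1q : (0:ℝ) < 1 - q := by linarith
  have hsum : Summable (fun k : ℕ => (q/(1-q)) * ((1 + ((k:ℝ) + n)) ^ (n-1) * q ^ k)) := by
    have := (summable_shift_pow_geom (n-1) hq0.le hq1 (1 + (n:ℝ)) (by positivity)).mul_left
      (q/(1-q))
    apply this.congr
    intro k
    ring_nf
  apply Summable.of_norm_bounded hsum
  intro k
  rw [Real.norm_eq_abs, Qk, Polynomial.coeff_C_mul, abs_mul, abs_div]
  have hfac : (1:ℝ) ≤ ((n-1).factorial : ℝ) := Nat.one_le_cast.2 (n-1).factorial_pos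
  have hqk : q ^ ((k:ℝ) + 1) = q ^ (k+1) := by
    rw [show ((k:ℝ)+1) = ((k+1:ℕ):ℝ) by push_cast; ring, Real.rpow_natCast]
  have htle : q ^ (k+1) ≤ q := by
    calc q ^ (k+1) = q * q^k := by ring
      _ ≤ q * 1 := by
          apply mul_le_mul_of_nonneg_left _ hq0.le
          exact pow_le_one₀ hq0.le hq1.le
      _ = q := mul_one q
  have htpos : 0 < q ^ (k+1) := by positivity
  have hlog : |Real.log (1 - q ^ ((k:ℝ)+1))| ≤ q^(k+1) / (1-q) := by
    rw [hqk]
    refine (abs_log_one_sub_le htpos.le (by linarith)).trans ?_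
    gcongr
  have hcb : |(∏ i ∈ Finset.range (n-1), (X - C ((k : ℝ) + 1 + (i : ℝ)))).coeff j|
      ≤ (1 + ((k:ℝ) + n)) ^ (n-1) := by
    apply coeff_prod_bound (fun i => (k:ℝ) + 1 + (i:ℝ)) ((k:ℝ) + n) (by positivity) (n-1)
    intro i hi
    have h2 : (i:ℕ) + 1 ≤ n := by omega
    have h3 : (i:ℝ) + 1 ≤ (n:ℝ) := by exact_mod_cast h2
    rw [abs_of_nonneg (by positivity)]
    linarith [Nat.cast_nonneg (α := ℝ) k]
  calc |Real.log (1 - q ^ ((k:ℝ)+1))| / |((n-1).factorial : ℝ)| *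
        |(∏ i ∈ Finset.range (n-1), (X - C ((k : ℝ) + 1 + (i : ℝ)))).coeff j|
      ≤ (q^(k+1)/(1-q)) * (1 + ((k:ℝ) + n)) ^ (n-1) := by
        apply mul_le_mul _ hcb (abs_nonneg _) (by positivity)
        calc |Real.log (1 - q ^ ((k:ℝ)+1))| / |((n-1).factorial : ℝ)|
            ≤ |Real.log (1 - q ^ ((k:ℝ)+1))| / 1 := by
              rw [abs_of_pos (by positivity : (0:ℝ) < ((n-1).factorial : ℝ))]
              gcongr
          _ = |Real.log (1 - q ^ ((k:ℝ)+1))| := div_one _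
          _ ≤ q^(k+1)/(1-q) := hlog
    _ = (q/(1-q)) * ((1 + ((k:ℝ) + n)) ^ (n-1) * q ^ k) := by ring

variable {ι : Type*} (c μ : ι → ℝ) (L a : ℝ)

lemma exp_le_exp_of_le {m x : ℝ} (hm : 0 < m) (hL : L < 0) (hx : a ≤ x) :
    Real.exp (m * L * x) ≤ Real.exp (m * L * a) := by
  apply Real.exp_le_exp.2
  have hmL : m * L < 0 := mul_neg_of_pos_of_neg hm hL
  nlinarith

lemma summable_expser (hL : L < 0) (hμ : ∀ i, 1 ≤ μ i)
    (hsm : ∀ j : ℕ, Summable (fun i => |c i| * μ i ^ j * Real.exp (μ i * L * a)))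
    (j : ℕ) {x : ℝ} (hx : a ≤ x) :
    Summable (fun i => c i * (μ i * L) ^ j * Real.exp (μ i * L * x)) := by
  apply Summable.of_norm_bounded (((hsm j).mul_left (|L| ^ j)))
  intro i
  have h1 : (0:ℝ) < μ i := lt_of_lt_of_le one_pos (hμ i)
  rw [Real.norm_eq_abs, abs_mul, abs_mul, abs_of_pos (Real.exp_pos _), abs_pow, abs_mul,
    abs_of_pos h1, mul_pow]
  have := exp_le_exp_of_le L a (x := x) h1 hL hx
  calc |c i| * (μ i ^ j * |L| ^ j) * Real.exp (μ i * L * x)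
      ≤ |c i| * (μ i ^ j * |L| ^ j) * Real.exp (μ i * L * a) := by
        gcongr
      _ = |L| ^ j * (|c i| * μ i ^ j * Real.exp (μ i * L * a)) := by ring

lemma hasDerivAt_expser (hL : L < 0) (hμ : ∀ i, 1 ≤ μ i)
    (hsm : ∀ j : ℕ, Summable (fun i => |c i| * μ i ^ j * Real.exp (μ i * L * a)))
    (j : ℕ) {x : ℝ} (hx : a < x) :
    HasDerivAt (fun y => ∑' i, c i * (μ i * L) ^ j * Real.exp (μ i * L * y))
      (∑' i, c i * (μ i * L) ^ (j + 1) * Real.exp (μ i * L * x)) x := by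
  have hterm : ∀ (i : ι) (y : ℝ),
      HasDerivAt (fun z => c i * (μ i * L) ^ j * Real.exp (μ i * L * z))
        (c i * (μ i * L) ^ (j + 1) * Real.exp (μ i * L * y)) y := by
    intro i y
    have h0 : HasDerivAt (fun z : ℝ => μ i * L * z) (μ i * L) y := by
      simpa using (hasDerivAt_id y).const_mul (μ i * L)
    have h1 : HasDerivAt (fun z => c i * (μ i * L) ^ j * Real.exp (μ i * L * z))
        (c i * (μ i * L) ^ j * (Real.exp (μ i * L * y) * (μ i * L))) y :=
      (h0.exp).const_mul (c i * (μ i * L) ^ j)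
    convert h1 using 1
    ring
  refine hasDerivAt_tsum_of_isPreconnected
    (u := fun i => |L| ^ (j+1) * (|c i| * μ i ^ (j+1) * Real.exp (μ i * L * a)))
    ((hsm (j+1)).mul_left _) isOpen_Ioi (isPreconnected_Ioi) (fun i y _ => hterm i y)
    ?_ (mem_Ioi.2 hx) ?_ (mem_Ioi.2 hx)
  · intro i y hy
    have h1 : (0:ℝ) < μ i := lt_of_lt_of_le one_pos (hμ i)
    rw [Real.norm_eq_abs, abs_mul, abs_mul, abs_of_pos (Real.exp_pos _), abs_pow, abs_mul,
      abs_of_pos h1, mul_pow]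
    have := exp_le_exp_of_le L a (x := y) h1 hL (le_of_lt (mem_Ioi.1 hy))
    calc |c i| * (μ i ^ (j+1) * |L| ^ (j+1)) * Real.exp (μ i * L * y)
        ≤ |c i| * (μ i ^ (j+1) * |L| ^ (j+1)) * Real.exp (μ i * L * a) := by
          gcongr
        _ = |L| ^ (j+1) * (|c i| * μ i ^ (j+1) * Real.exp (μ i * L * a)) := by ring
  · exact summable_expser c μ L a hL hμ hsm j hx.le

lemma contDiffOn_expser (hL : L < 0) (hμ : ∀ i, 1 ≤ μ i)
    (hsm : ∀ j : ℕ, Summable (fun i => |c i| * μ i ^ j * Real.exp (μ i * L * a)))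
    (r : ℕ) : ∀ j : ℕ,
    ContDiffOn ℝ r (fun y => ∑' i, c i * (μ i * L) ^ j * Real.exp (μ i * L * y)) (Set.Ioi a) := by
  induction r with
  | zero =>
    intro j
    rw [Nat.cast_zero, contDiffOn_zero]
    intro y hy
    exact ((hasDerivAt_expser c μ L a hL hμ hsm j (mem_Ioi.1 hy)).continuousAt).continuousWithinAt
  | succ r ih =>
    intro j
    rw [show ((r+1 : ℕ) : WithTop ℕ∞) = (r : WithTop ℕ∞) + 1 by push_cast; ring]
    rw [contDiffOn_succ_iff_deriv_of_isOpen isOpen_Ioi]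
    refine ⟨fun y hy => ((hasDerivAt_expser c μ L a hL hμ hsm j
      (mem_Ioi.1 hy)).differentiableAt).differentiableWithinAt, by simp, ?_⟩
    apply (ih (j+1)).congr
    intro y hy
    exact ((hasDerivAt_expser c μ L a hL hμ hsm j (mem_Ioi.1 hy)).deriv)


lemma iteratedDeriv_polyeval (p : Polynomial ℝ) : ∀ k : ℕ,
    iteratedDeriv k (fun x => p.eval x) = fun x => (Polynomial.derivative^[k] p).eval x
  | 0 => by simp
  | (k + 1) => by
    rw [iteratedDeriv_succ, iteratedDeriv_polyeval p k, Function.iterate_succ_apply']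
    funext x
    exact Polynomial.deriv (p := Polynomial.derivative^[k] p)

lemma contDiff_polyeval (p : Polynomial ℝ) {N : WithTop ℕ∞} :
    ContDiff ℝ N (fun x => p.eval x) := by
  induction p using Polynomial.induction_on' with
  | add p q hp hq => simpa [Polynomial.eval_add] using hp.add hq
  | monomial m a => simpa [Polynomial.eval_monomial] using contDiff_const.mul (contDiff_id.pow m)

lemma Ptot_natDegree_lt (hn : 1 ≤ n) : (QMG.Ptot q n).natDegree < n + 1 := by
  have h1 : (QMG.PAp q n).natDegree ≤ n := by
    refine (Polynomial.natDegree_C_mul_le _ _).trans ?_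
    refine (Polynomial.natDegree_prod_le _ _).trans ?_
    apply le_of_eq
    simp only [Polynomial.natDegree_X_sub_C]
    simp
  have h2 : (QMG.Ppoly q n).natDegree ≤ n := by
    apply Polynomial.natDegree_sum_le_of_forall_le
    intro j hj
    refine (Polynomial.natDegree_C_mul_le _ _).trans ?_
    rw [Polynomial.natDegree_X_pow]
    exact le_of_lt (Finset.mem_range.1 hj)
  have := Polynomial.natDegree_add_le (QMG.PAp q n) (QMG.Ppoly q n)
  rw [QMG.Ptot]
  omega

lemma mu_ge_one : ∀ i : ℕ × ℕ, 1 ≤ mu i := by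
  rintro ⟨k, m⟩
  show (1:ℝ) ≤ (m:ℝ) + 1
  linarith [Nat.cast_nonneg (α := ℝ) m]

lemma key_eq (hq0 : 0 < q) (hq1 : q < 1) (hn : 1 ≤ n) {x : ℝ} (hx : -(1/2) < x) :
    Real.log (qMultiGamma n q (x + 1)) =
      (Ptot q n).eval x +
        ∑' i : ℕ × ℕ, cc q n i * (mu i * Real.log q) ^ 0 * Real.exp (mu i * Real.log q * x) := by
  have hL : Real.log q < 0 := Real.log_neg hq0 hq1
  have h1q : (0:ℝ) < 1 - q := by linarith
  -- positivity facts
  have htpos : ∀ k : ℕ, 0 < q ^ (x + (k:ℝ) + 1) := fun k => Real.rpow_pos_of_pos hq0 _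
  have htlt : ∀ k : ℕ, q ^ (x + (k:ℝ) + 1) < 1 := by
    intro k
    apply Real.rpow_lt_one hq0.le hq1
    have := Nat.cast_nonneg (α := ℝ) k
    linarith
  have hApos : ∀ k : ℕ, 0 < 1 - q ^ (x + (k:ℝ) + 1) := fun k => by linarith [htlt k]
  have hBpos : ∀ k : ℕ, 0 < 1 - q ^ ((k:ℝ) + 1) := by
    intro k
    have : q ^ ((k:ℝ) + 1) < 1 := by
      apply Real.rpow_lt_one hq0.le hq1
      have := Nat.cast_nonneg (α := ℝ) k
      linarith
    linarith
  -- step 1: unfold qMultiGamma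
  have hG : qMultiGamma n q (x + 1) =
      (1 - q) ^ (-gbinom x n) * ∏' k : ℕ, qGammaTerm n q x k := by
    rw [qMultiGamma, if_neg (by omega)]
    simp only [add_sub_cancel_right]
  -- per-term computations
  set s1 : ℕ → ℝ := fun k => (Qk q n k).eval x with hs1def
  set s2 : ℕ → ℝ := fun k =>
    ((-1:ℝ)^n * Dk n k) * Real.log (1 - q ^ (x + (k:ℝ) + 1)) with hs2def
  have hgb1 : ∀ k : ℕ, -gbinom (-((k:ℝ)+1)) (n-1) = (-1:ℝ)^n * Dk n k := by
    intro k
    rw [gbinom, Dk]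
    rw [show (∏ i ∈ Finset.range (n-1), (-((k:ℝ)+1) - (i:ℕ)))
        = ∏ i ∈ Finset.range (n-1), (-1) * ((k:ℝ)+1+(i:ℕ)) from
      Finset.prod_congr rfl (fun i _ => by ring)]
    rw [Finset.prod_mul_distrib, Finset.prod_const, Finset.card_range]
    have hpow : ((-1:ℝ))^n = (-1:ℝ)^(n-1) * (-1) := by
      have h := pow_succ (-1:ℝ) (n-1)
      rw [show n - 1 + 1 = n from by omega] at h
      rw [h]
    rw [hpow]
    ring
  have hgb2 : ∀ k : ℕ, gbinom (x - ((k:ℝ)+1)) (n-1) * Real.log (1 - q ^ ((k:ℝ)+1))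
      = (Qk q n k).eval x := by
    intro k
    rw [gbinom, Qk, Polynomial.eval_mul, Polynomial.eval_C, Polynomial.eval_prod]
    simp only [Polynomial.eval_sub, Polynomial.eval_X, Polynomial.eval_C]
    rw [show (∏ i ∈ Finset.range (n-1), (x - ((k:ℝ)+1) - (i:ℕ)))
        = ∏ i ∈ Finset.range (n-1), (x - ((k:ℝ)+1+(i:ℕ))) from
      Finset.prod_congr rfl (fun i _ => by ring)]
    ring
  have hlogterm : ∀ k : ℕ, Real.log (qGammaTerm n q x k) = s1 k + s2 k := by
    intro k
    rw [qGammaTerm]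
    have hdiv : 0 < (1 - q ^ (x + (k:ℝ) + 1)) / (1 - q ^ ((k:ℝ)+1)) :=
      div_pos (hApos k) (hBpos k)
    rw [Real.log_mul (Real.rpow_pos_of_pos hdiv _).ne' (Real.rpow_pos_of_pos (hBpos k) _).ne',
      Real.log_rpow hdiv, Real.log_rpow (hBpos k),
      Real.log_div (hApos k).ne' (hBpos k).ne']
    have e1 := hgb1 k
    have e2 := hgb2 k
    rw [hs1def, hs2def]
    simp only []
    linear_combination Real.log (1 - q ^ (x + (k:ℝ) + 1)) * e1 + e2
  -- summability of s1 and its tsum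
  have hdeg := fun k => Qk_natDegree_lt (q := q) hn k
  have hs1eval : ∀ k : ℕ, s1 k = ∑ j ∈ Finset.range n, (Qk q n k).coeff j * x ^ j :=
    fun k => Polynomial.eval_eq_sum_range' (hdeg k) x
  have hcoeff := fun j => Qk_coeff_summable hq0 hq1 hn j
  have hS1 : Summable s1 := by
    apply (summable_sum (s := Finset.range n)
      (fun j _ => (hcoeff j).mul_right (x ^ j))).congr
    intro k
    exact (hs1eval k).symm
  have htsum1 : ∑' k, s1 k = (Ppoly q n).eval x := by
    rw [tsum_congr hs1eval, Summable.tsum_finsetSum (fun j _ => (hcoeff j).mul_right (x ^ j))]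
    rw [Ppoly, Polynomial.eval_finset_sum]
    apply Finset.sum_congr rfl
    intro j _
    rw [Polynomial.eval_mul, Polynomial.eval_C, Polynomial.eval_pow, Polynomial.eval_X,
      tsum_mul_right]
  -- summability of s2
  set σ : ℝ := q ^ (x + 1) with hσdef
  have hσpos : 0 < σ := Real.rpow_pos_of_pos hq0 _
  have hσlt : σ < 1 := Real.rpow_lt_one hq0.le hq1 (by linarith)
  have htk : ∀ k : ℕ, q ^ (x + (k:ℝ) + 1) = σ * q ^ k := by
    intro k
    rw [hσdef, show x + (k:ℝ) + 1 = (x + 1) + (k:ℝ) by ring, Real.rpow_add hq0,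
      Real.rpow_natCast]
  have hS2 : Summable s2 := by
    have hsum : Summable (fun k : ℕ => (σ/(1-σ)) * (((k:ℝ) + n) ^ (n-1) * q ^ k)) :=
      (summable_shift_pow_geom (n-1) hq0.le hq1 n (Nat.cast_nonneg n)).mul_left _
    apply Summable.of_norm_bounded hsum
    intro k
    rw [Real.norm_eq_abs, hs2def]
    simp only []
    rw [abs_mul, abs_mul, abs_pow, abs_neg, abs_one, one_pow, one_mul,
      abs_of_pos (Dk_pos n k)]
    have hqk1 : q ^ k ≤ 1 := pow_le_one₀ hq0.le hq1.le
    have hbd : |Real.log (1 - q ^ (x + (k:ℝ) + 1))| ≤ (σ * q ^ k) / (1 - σ) := by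
      rw [htk k]
      refine (abs_log_one_sub_le (by positivity) (by rw [← htk k]; exact htlt k)).trans ?_
      gcongr <;> nlinarith [pow_nonneg hq0.le k]
    calc Dk n k * |Real.log (1 - q ^ (x + (k:ℝ) + 1))|
        ≤ ((k:ℝ) + n) ^ (n-1) * ((σ * q ^ k) / (1 - σ)) :=
          mul_le_mul (Dk_le n k) hbd (abs_nonneg _) (by positivity)
      _ = (σ/(1-σ)) * (((k:ℝ) + n) ^ (n-1) * q ^ k) := by ring
  -- HasSum of logs and HasProd
  have hHS : HasSum (fun k => Real.log (qGammaTerm n q x k)) ((Ppoly q n).eval x + ∑' k, s2 k) := by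
    have h0 := hS1.hasSum.add hS2.hasSum
    rw [htsum1] at h0
    have e : (fun k => Real.log (qGammaTerm n q x k)) = fun k => s1 k + s2 k :=
      funext hlogterm
    rw [e]
    exact h0
  have hterm_pos : ∀ k : ℕ, 0 < qGammaTerm n q x k := by
    intro k
    rw [qGammaTerm]
    exact mul_pos (Real.rpow_pos_of_pos (div_pos (hApos k) (hBpos k)) _)
      (Real.rpow_pos_of_pos (hBpos k) _)
  have hprod : HasProd (fun k => qGammaTerm n q x k)
      (Real.exp ((Ppoly q n).eval x + ∑' k, s2 k)) := by
    have h2 := hHS.rexp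
    have e : Real.exp ∘ (fun k => Real.log (qGammaTerm n q x k))
        = fun k => qGammaTerm n q x k :=
      funext fun k => Real.exp_log (hterm_pos k)
    rwa [e] at h2
  have htprod : ∏' k : ℕ, qGammaTerm n q x k
      = Real.exp ((Ppoly q n).eval x + ∑' k, s2 k) := hprod.tprod_eq
  -- fiberwise HasSum for the double series
  have hmu := mu_ge_one
  have hsm := fun j => hsm_main q n hq0 hq1 hn j
  have hfib : ∀ k : ℕ, HasSum
      (fun m : ℕ => cc q n (k, m) * (mu (k, m) * Real.log q) ^ 0 *
        Real.exp (mu (k, m) * Real.log q * x)) (s2 k) := by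
    intro k
    set t : ℝ := q ^ (x + (k:ℝ) + 1) with htdef
    have ht0 : 0 < t := htpos k
    have ht1 : t < 1 := htlt k
    have hlog := Real.hasSum_pow_div_log_of_abs_lt_one
      (x := t) (by rw [abs_of_pos ht0]; exact ht1)
    have h3 := hlog.mul_left ((-1:ℝ)^(n+1) * Dk n k)
    have hval : ((-1:ℝ)^(n+1) * Dk n k) * (-Real.log (1 - t)) = s2 k := by
      rw [hs2def]
      simp only []
      rw [pow_succ]
      ring
    rw [hval] at h3
    have hterm : (fun m : ℕ => ((-1:ℝ)^(n+1) * Dk n k) * (t ^ (m+1) / ((m:ℝ)+1)))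
        = fun m : ℕ => cc q n (k, m) * (mu (k, m) * Real.log q) ^ 0 *
          Real.exp (mu (k, m) * Real.log q * x) := by
      funext m
      have htexp : t = Real.exp (Real.log q * (x + (k:ℝ) + 1)) := by
        rw [htdef, Real.rpow_def_of_pos hq0]
      have hpow : t ^ (m+1) = Real.exp (((m:ℝ)+1) * (((k:ℝ)+1) * Real.log q)) *
          Real.exp (((m:ℝ)+1) * Real.log q * x) := by
        rw [htexp, ← Real.exp_nat_mul]
        rw [← Real.exp_add]
        congr 1
        push_cast
        ring
      rw [hpow, cc, mu]
      simp only [pow_zero, mul_one]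
      ring
    rw [hterm] at h3
    exact h3
  have hsum2d : Summable (fun i : ℕ × ℕ =>
      cc q n i * (mu i * Real.log q) ^ 0 * Real.exp (mu i * Real.log q * x)) :=
    summable_expser (cc q n) mu (Real.log q) (-(1/2)) hL hmu hsm 0 hx.le
  have hU : ∑' k, s2 k = ∑' i : ℕ × ℕ,
      cc q n i * (mu i * Real.log q) ^ 0 * Real.exp (mu i * Real.log q * x) := by
    rw [Summable.tsum_prod' hsum2d (fun k => (hfib k).summable)]
    exact (tsum_congr (fun k => (hfib k).tsum_eq)).symm
  -- assemble
  have hPA : -gbinom x n * Real.log (1 - q) = (PAp q n).eval x := by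
    rw [gbinom, PAp, Polynomial.eval_mul, Polynomial.eval_C, Polynomial.eval_prod]
    simp only [Polynomial.eval_sub, Polynomial.eval_X, Polynomial.eval_C]
    ring
  rw [hG, Real.log_mul (Real.rpow_pos_of_pos h1q _).ne'
      (by rw [htprod]; exact (Real.exp_pos _).ne'),
    Real.log_rpow h1q, htprod, Real.log_exp, Ptot, Polynomial.eval_add, ← hPA, hU]
  ring

end QMG

/-- For `0 < q < 1` and `n ≥ 1`, the function `x ↦ log G_n(x+1;q)` is `(n+1)`-times
differentiable on `(0,∞)` and its `(n+1)`-st derivative is nonnegative for `x ≥ 0`. -/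
theorem qMultiGamma_log_contDiff_and_iteratedDeriv_nonneg (q : ℝ) (hq0 : 0 < q) (hq1 : q < 1)
    (n : ℕ) (hn : 1 ≤ n) :
    ContDiffOn ℝ (n + 1) (fun x : ℝ => Real.log (qMultiGamma n q (x + 1))) (Set.Ioi 0) ∧
    ∀ x : ℝ, 0 ≤ x →
      0 ≤ iteratedDeriv (n + 1) (fun x : ℝ => Real.log (qMultiGamma n q (x + 1))) x := by
  have hL : Real.log q < 0 := Real.log_neg hq0 hq1
  have hmu := QMG.mu_ge_one
  have hsm := fun j => QMG.hsm_main q n hq0 hq1 hn j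
  set F : ℝ → ℝ := fun x => Real.log (qMultiGamma n q (x + 1)) with hF
  set G : ℕ → ℝ → ℝ := fun j x => (Polynomial.derivative^[j] (QMG.Ptot q n)).eval x +
    ∑' i : ℕ × ℕ, QMG.cc q n i * (QMG.mu i * Real.log q) ^ j *
      Real.exp (QMG.mu i * Real.log q * x) with hGdef
  have hkey : ∀ j : ℕ, ∀ x ∈ Set.Ioi (-(1/2) : ℝ), iteratedDeriv j F x = G j x := by
    intro j
    induction j with
    | zero =>
      intro x hx
      rw [iteratedDeriv_zero, hGdef]
      simp only [Function.iterate_zero, id_eq]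
      exact QMG.key_eq hq0 hq1 hn (Set.mem_Ioi.1 hx)
    | succ j ih =>
      intro x hx
      rw [iteratedDeriv_succ]
      have hev : iteratedDeriv j F =ᶠ[nhds x] G j := by
        filter_upwards [isOpen_Ioi.mem_nhds hx] with y hy using ih y hy
      rw [hev.deriv_eq]
      have hder : HasDerivAt (G j) ((Polynomial.derivative^[j+1] (QMG.Ptot q n)).eval x +
          ∑' i : ℕ × ℕ, QMG.cc q n i * (QMG.mu i * Real.log q) ^ (j+1) *
            Real.exp (QMG.mu i * Real.log q * x)) x := by
        rw [hGdef, Function.iterate_succ_apply']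
        exact (Polynomial.hasDerivAt _ x).add
          (QMG.hasDerivAt_expser (QMG.cc q n) QMG.mu (Real.log q) (-(1/2)) hL hmu hsm j
            (Set.mem_Ioi.1 hx))
      rw [hder.deriv, hGdef]
  constructor
  · have hsub : Set.Ioi (0:ℝ) ⊆ Set.Ioi (-(1/2) : ℝ) := fun y hy =>
      lt_trans (by norm_num) (Set.mem_Ioi.1 hy)
    have hg : ContDiffOn ℝ ((n+1 : ℕ) : WithTop ℕ∞) (G 0) (Set.Ioi (-(1/2) : ℝ)) := by
      rw [hGdef]
      exact ((QMG.contDiff_polyeval _).contDiffOn).add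
        (QMG.contDiffOn_expser (QMG.cc q n) QMG.mu (Real.log q) (-(1/2)) hL hmu hsm (n+1) 0)
    have hgoal : ContDiffOn ℝ ((n+1 : ℕ) : WithTop ℕ∞) F (Set.Ioi 0) := by
      apply (hg.mono hsub).congr
      intro y hy
      exact hkey 0 y (hsub hy)
    have hcast : ((n+1 : ℕ) : WithTop ℕ∞) = (n : WithTop ℕ∞) + 1 := by push_cast; ring
    rwa [hcast] at hgoal
  · intro x hx
    have hx' : x ∈ Set.Ioi (-(1/2) : ℝ) := Set.mem_Ioi.2 (by linarith)
    rw [hkey (n+1) x hx', hGdef]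
    simp only [Polynomial.iterate_derivative_eq_zero (QMG.Ptot_natDegree_lt (q := q) hn),
      Polynomial.eval_zero, zero_add]
    apply tsum_nonneg
    rintro ⟨k, m⟩
    have hccval : QMG.cc q n (k, m) = (-1:ℝ)^(n+1) *
        (QMG.Dk n k * Real.exp (((m:ℝ)+1) * (((k:ℝ)+1) * Real.log q)) / ((m:ℝ)+1)) := rfl
    have hmuval : QMG.mu (k, m) = (m:ℝ) + 1 := rfl
    have hre : QMG.cc q n (k, m) * (QMG.mu (k, m) * Real.log q) ^ (n+1) *
          Real.exp (QMG.mu (k, m) * Real.log q * x)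
        = (QMG.Dk n k * Real.exp (((m:ℝ)+1) * (((k:ℝ)+1) * Real.log q)) / ((m:ℝ)+1)) *
          (-(QMG.mu (k, m) * Real.log q)) ^ (n+1) *
          Real.exp (QMG.mu (k, m) * Real.log q * x) := by
      rw [hccval, neg_pow]
      ring
    rw [hre]
    have hmuL : 0 ≤ -(QMG.mu (k, m) * Real.log q) := by
      rw [hmuval]
      have h1 : (0:ℝ) < (m:ℝ) + 1 := by positivity
      nlinarith
    have hDk := QMG.Dk_pos n k
    apply mul_nonneg (mul_nonneg _ (pow_nonneg hmuL _)) (Real.exp_nonneg _)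
    positivity


end
end

section
/- Fix integers n ≥ 1 and r ≥ 1 and a real δ with 0 < δ < π. Then F_{n,r-1}(z) := (d/dt)^{r-1}[ binom(-t,n-1)·log((z+t)/(z+1)) ] evaluated at t=1 satisfies |F_{n,r-1}(z)| = O(|z|^{n-r}) as |z| → ∞ with z in the sector Δ_δ := {z ∈ ℂ : |arg z| < π - δ}. -/
open Filter Topology MeasureTheory

noncomputable section

open Metric in
/-- Cauchy estimate for iterated derivatives. -/
lemma cauchy_bound {f : ℂ → ℂ} {c : ℂ} {R C : ℝ} (hR : 0 < R)
    (hd : DiffContOnCl ℂ f (ball c R))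
    (hC : ∀ w ∈ sphere c R, ‖f w‖ ≤ C) (k : ℕ) :
    ‖iteratedDeriv k f c‖ ≤ (k.factorial : ℝ) * C / R ^ k := by
  have hC0 : 0 ≤ C := by
    have hm : c + R ∈ sphere c R := by
      simp [Complex.dist_eq, abs_of_nonneg hR.le]
    exact (norm_nonneg _).trans (hC _ hm)
  lift R to NNReal using hR.le with R' hR'
  have hRpos : 0 < R' := by exact_mod_cast hR
  have h := hd.hasFPowerSeriesOnBall hRpos
  set p := cauchyPowerSeries f c R' with hp
  have hiter : iteratedDeriv k f c = k.factorial • p k (fun _ => (1:ℂ)) := by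
    rw [iteratedDeriv_eq_iteratedFDeriv, ← h.factorial_smul 1 k]
  have hI : (2 * Real.pi)⁻¹ * ∫ θ : ℝ in (0)..2 * Real.pi, ‖f (circleMap c R' θ)‖ ≤ C := by
    have hint : ∫ θ : ℝ in (0)..2 * Real.pi, ‖f (circleMap c R' θ)‖ ≤ C * (2 * Real.pi) := by
      calc ∫ θ : ℝ in (0)..2 * Real.pi, ‖f (circleMap c R' θ)‖
          ≤ ‖∫ θ : ℝ in (0)..2 * Real.pi, ‖f (circleMap c R' θ)‖‖ := le_abs_self _
        _ ≤ C * |2 * Real.pi - 0| := by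
            apply intervalIntegral.norm_integral_le_of_norm_le_const
            intro θ _
            simpa using hC _ (circleMap_mem_sphere c (by exact_mod_cast hRpos.le) θ)
        _ = C * (2 * Real.pi) := by
            rw [sub_zero, abs_of_pos Real.two_pi_pos]
    rw [inv_mul_le_iff₀ Real.two_pi_pos]
    linarith [hint]
  have hpk : ‖p k (fun _ => (1:ℂ))‖ ≤ C * (R':ℝ)⁻¹ ^ k := by
    calc ‖p k (fun _ => (1:ℂ))‖ ≤ ‖p k‖ * ∏ _i : Fin k, ‖(1:ℂ)‖ :=
          (p k).le_opNorm _
      _ = ‖p k‖ := by simp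
      _ ≤ ((2 * Real.pi)⁻¹ * ∫ θ : ℝ in (0)..2 * Real.pi, ‖f (circleMap c R' θ)‖) * |(R':ℝ)|⁻¹ ^ k :=
          norm_cauchyPowerSeries_le f c R' k
      _ ≤ C * (R':ℝ)⁻¹ ^ k := by
          rw [abs_of_pos hR]
          exact mul_le_mul_of_nonneg_right hI (by positivity)
  rw [hiter, ← Nat.cast_smul_eq_nsmul ℂ, norm_smul, Complex.norm_natCast]
  calc (k.factorial : ℝ) * ‖p k (fun _ => (1:ℂ))‖
      ≤ (k.factorial : ℝ) * (C * (R':ℝ)⁻¹ ^ k) := mul_le_mul_of_nonneg_left hpk (by positivity)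
    _ = (k.factorial : ℝ) * C / (R':ℝ) ^ k := by rw [inv_pow]; ring

/-- Transfer of iterated derivatives from ℝ to ℂ for holomorphic functions. -/
lemma iteratedDeriv_comp_ofReal {f : ℂ → ℂ} {U : Set ℂ} (hU : IsOpen U)
    (hf : DifferentiableOn ℂ f U) (k : ℕ) :
    ∀ t : ℝ, (t:ℂ) ∈ U → iteratedDeriv k (fun s : ℝ => f s) t = iteratedDeriv k f t := by
  induction k with
  | zero => simp
  | succ k ih =>
    intro t ht
    have hA : AnalyticOnNhd ℂ f U := hf.analyticOnNhd hU
    have hAk : AnalyticOnNhd ℂ (iteratedDeriv k f) U := by simpa [← iteratedDeriv_eq_iterate] using hA.iterated_deriv k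
    rw [iteratedDeriv_succ, iteratedDeriv_succ]
    have hopen : IsOpen {s : ℝ | (s:ℂ) ∈ U} := hU.preimage Complex.continuous_ofReal
    have hev : (fun s : ℝ => iteratedDeriv k (fun s' : ℝ => f s') s)
        =ᶠ[nhds t] (fun s : ℝ => iteratedDeriv k f s) := by
      filter_upwards [hopen.mem_nhds ht] with s hs using ih s hs
    rw [hev.deriv_eq]
    exact (((hAk _ ht).differentiableAt).hasDerivAt.comp_ofReal).deriv


/-- Generalized binomial coefficient `binom(z,n) = z(z-1)⋯(z-n+1)/n!` (complex). -/
def gbinomC (z : ℂ) (n : ℕ) : ℂ := (∏ i ∈ Finset.range n, (z - i)) / (n.factorial : ℂ)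

/-- `F_{n,r}(z) = (d/dt)^r [ binom(-t,n-1)·log((z+t)/(z+1)) ]|_{t=1}`, for complex `z`, with the
principal branch of the logarithm. -/
def FclC (n r : ℕ) (z : ℂ) : ℂ :=
  iteratedDeriv r
    (fun t : ℝ => gbinomC (-(t : ℂ)) (n - 1) * Complex.log ((z + t) / (z + 1))) 1

/-- In the sector `Δ_δ = {|arg z| < π - δ}`, `|F_{n,r-1}(z)| = O(|z|^{n-r})` as `|z| → ∞`. -/
theorem FclC_isBigO_in_sector (n r : ℕ) (hn : 1 ≤ n) (hr : 1 ≤ r)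
    (δ : ℝ) (hδ : 0 < δ) (hδπ : δ < Real.pi) :
    (fun z : ℂ => FclC n (r - 1) z) =O[Bornology.cobounded ℂ ⊓
        Filter.principal {z : ℂ | |Complex.arg z| < Real.pi - δ}]
      fun z : ℂ => ‖z‖ ^ ((n : ℤ) - r) := by
  have key : (fun z : ℂ => FclC n (r - 1) z) =O[Bornology.cobounded ℂ]
      fun z : ℂ => ‖z‖ ^ ((n : ℤ) - r) := by
    rw [Asymptotics.isBigO_iff]
    refine ⟨((r-1).factorial : ℝ) * 6 * 2 ^ (r-1), ?_⟩
    filter_upwards [eventually_cobounded_le_norm (max 10 (2*(n:ℝ)+4))] with z hz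
    set a : ℝ := ‖z‖ with ha
    have ha10 : 10 ≤ a := le_trans (le_max_left _ _) hz
    have han : 2*(n:ℝ)+4 ≤ a := le_trans (le_max_right _ _) hz
    have ha0 : (0:ℝ) < a := by linarith
    -- basic facts about z+1
    have hz1norm : a - 1 ≤ ‖z + 1‖ := by
      have := norm_sub_norm_le z (-1)
      simpa using this
    have hz1ne : z + 1 ≠ 0 := by
      intro h
      rw [h] at hz1norm
      simp only [norm_zero] at hz1norm
      linarith
    set f : ℂ → ℂ := fun w => gbinomC (-w) (n-1) * Complex.log ((z+w)/(z+1)) with hf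
    set U : Set ℂ := Metric.ball (1:ℂ) (a/2 + 1) with hU
    -- representation of the ratio
    have hrepr : ∀ w : ℂ, (z+w)/(z+1) = 1 + (w-1)/(z+1) := by
      intro w; field_simp; ring
    have hu : ∀ w : ℂ, ‖w - 1‖ ≤ a/2 + 1 → ‖(w-1)/(z+1)‖ ≤ 2/3 := by
      intro w hw
      rw [norm_div]
      rw [div_le_iff₀ (by linarith)]
      calc ‖w - 1‖ ≤ a/2 + 1 := hw
        _ ≤ 2/3 * (a - 1) := by linarith
        _ ≤ 2/3 * ‖z + 1‖ := by linarith
    have hslit : ∀ w : ℂ, ‖w - 1‖ ≤ a/2 + 1 → (z+w)/(z+1) ∈ Complex.slitPlane := by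
      intro w hw
      rw [hrepr w]
      refine Complex.mem_slitPlane_iff.mpr (Or.inl ?_)
      have h1 : |((w-1)/(z+1)).re| ≤ ‖(w-1)/(z+1)‖ := Complex.abs_re_le_norm _
      have h2 := hu w hw
      have : -(2/3 : ℝ) ≤ ((w-1)/(z+1)).re := by
        have := neg_abs_le ((w-1)/(z+1)).re
        linarith
      simp only [Complex.add_re, Complex.one_re]
      linarith
    have hvbounds : ∀ w : ℂ, ‖w - 1‖ ≤ a/2 + 1 →
        (1/3 : ℝ) ≤ ‖(z+w)/(z+1)‖ ∧ ‖(z+w)/(z+1)‖ ≤ 5/3 := by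
      intro w hw
      have h2 := hu w hw
      rw [hrepr w]
      constructor
      · have := norm_sub_norm_le (1:ℂ) (-((w-1)/(z+1)))
        simp only [norm_one, sub_neg_eq_add, norm_neg] at this
        linarith
      · calc ‖1 + (w-1)/(z+1)‖ ≤ ‖(1:ℂ)‖ + ‖(w-1)/(z+1)‖ := norm_add_le _ _
          _ ≤ 1 + 2/3 := by rw [norm_one]; linarith
          _ ≤ 5/3 := by norm_num
    have hlog : ∀ w : ℂ, ‖w - 1‖ ≤ a/2 + 1 → ‖Complex.log ((z+w)/(z+1))‖ ≤ 6 := by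
      intro w hw
      obtain ⟨hlo, hhi⟩ := hvbounds w hw
      set v := (z+w)/(z+1) with hv
      have hvpos : (0:ℝ) < ‖v‖ := by linarith
      have hd : Complex.log v = (Real.log (‖v‖) : ℂ) + (Complex.arg v) * Complex.I := rfl
      have hlog1 : Real.log (‖v‖) ≤ 2/3 := by
        calc Real.log (‖v‖) ≤ ‖v‖ - 1 := Real.log_le_sub_one_of_pos hvpos
          _ ≤ 5/3 - 1 := by linarith
          _ ≤ 2/3 := by norm_num
      have hlog2 : -(2:ℝ) ≤ Real.log (‖v‖) := by
        have h1 : Real.log ‖v‖⁻¹ ≤ ‖v‖⁻¹ - 1 :=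
          Real.log_le_sub_one_of_pos (by positivity)
        have h2 : ‖v‖⁻¹ ≤ 3 := by
          rw [inv_le_comm₀ (by positivity) (by norm_num)]
          linarith
        rw [Real.log_inv] at h1
        linarith
      calc ‖Complex.log v‖
          ≤ ‖(Real.log (‖v‖) : ℂ)‖ + ‖(Complex.arg v : ℂ) * Complex.I‖ := by
            rw [hd]; exact norm_add_le _ _
        _ = |Real.log (‖v‖)| + |Complex.arg v| := by
            rw [norm_mul, Complex.norm_I, mul_one, Complex.norm_real, Complex.norm_real,
              Real.norm_eq_abs, Real.norm_eq_abs]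
        _ ≤ 2 + Real.pi := by
            have := Complex.abs_arg_le_pi v
            have habs : |Real.log (‖v‖)| ≤ 2 := abs_le.mpr ⟨hlog2, by linarith⟩
            linarith
        _ ≤ 6 := by linarith [Real.pi_le_four]
    have hpoly : ∀ w : ℂ, ‖w - 1‖ ≤ a/2 + 1 → ‖gbinomC (-w) (n-1)‖ ≤ a^(n-1) := by
      intro w hw
      rw [gbinomC, norm_div, Complex.norm_natCast]
      have h1 : ‖∏ i ∈ Finset.range (n-1), (-w - (i:ℂ))‖ ≤ a^(n-1) := by
        rw [norm_prod]
        calc ∏ i ∈ Finset.range (n-1), ‖(-w - (i:ℂ))‖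
            ≤ ∏ _i ∈ Finset.range (n-1), a := by
              apply Finset.prod_le_prod (fun i _ => norm_nonneg _)
              intro i hi
              have hi' : (i:ℝ) ≤ n := by
                have := Finset.mem_range.mp hi
                exact_mod_cast le_of_lt (lt_of_lt_of_le this (Nat.sub_le n 1))
              calc ‖(-w - (i:ℂ))‖ ≤ ‖w‖ + (i:ℝ) := by
                    have : ‖(-w - (i:ℂ))‖ ≤ ‖-w‖ + ‖(i:ℂ)‖ := norm_sub_le _ _
                    simpa using this
                _ ≤ (‖w - 1‖ + 1) + (n:ℝ) := by
                    have : ‖w‖ ≤ ‖w - 1‖ + 1 := by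
                      have := norm_add_le (w - 1) 1
                      simpa using this
                    linarith
                _ ≤ (a/2 + 1 + 1) + (n:ℝ) := by linarith
                _ ≤ a := by linarith
          _ = a^(n-1) := by rw [Finset.prod_const, Finset.card_range]
      calc ‖∏ i ∈ Finset.range (n-1), (-w - (i:ℂ))‖ / ((n-1).factorial : ℝ)
          ≤ ‖∏ i ∈ Finset.range (n-1), (-w - (i:ℂ))‖ :=
            div_le_self (norm_nonneg _)
              (by exact_mod_cast Nat.one_le_iff_ne_zero.mpr (Nat.factorial_ne_zero _))
        _ ≤ a^(n-1) := h1
    -- differentiability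
    have hdiff : DifferentiableOn ℂ f U := by
      intro w hw
      have hw' : ‖w - 1‖ < a/2 + 1 := by
        rw [hU, Metric.mem_ball, dist_eq_norm] at hw; exact hw
      apply DifferentiableAt.differentiableWithinAt
      apply DifferentiableAt.mul
      · have hprod : DifferentiableAt ℂ (fun w : ℂ => ∏ i ∈ Finset.range (n-1), (-w - (i:ℂ))) w :=
          DifferentiableAt.fun_finsetProd (fun i _ => (differentiableAt_id.neg.sub_const _))
        simpa [gbinomC, div_eq_mul_inv] using hprod.mul_const (((n-1).factorial : ℂ)⁻¹)
      · have hinner : DifferentiableAt ℂ (fun w : ℂ => (z+w)/(z+1)) w :=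
          ((differentiableAt_const z).add differentiableAt_id).div_const _
        exact (Complex.differentiableAt_log (hslit w hw'.le)).comp w hinner
    -- transfer from ℝ to ℂ
    have h1U : ((1:ℝ):ℂ) ∈ U := by
      simp only [hU, Complex.ofReal_one]
      exact Metric.mem_ball_self (by linarith)
    have htrans : FclC n (r-1) z = iteratedDeriv (r-1) f 1 := by
      rw [show FclC n (r-1) z = iteratedDeriv (r-1) (fun t : ℝ => f ↑t) 1 from rfl]
      have h := iteratedDeriv_comp_ofReal Metric.isOpen_ball hdiff (r-1) 1 h1U
      rwa [Complex.ofReal_one] at h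
    -- Cauchy estimate
    have hR2 : (0:ℝ) < a/2 := by linarith
    have hcl : DiffContOnCl ℂ f (Metric.ball (1:ℂ) (a/2)) := by
      apply DifferentiableOn.diffContOnCl
      apply hdiff.mono
      rw [closure_ball (1:ℂ) (by positivity : (a/2:ℝ) ≠ 0)]
      exact Metric.closedBall_subset_ball (by linarith)
    have hsphere : ∀ w ∈ Metric.sphere (1:ℂ) (a/2), ‖f w‖ ≤ 6 * a^(n-1) := by
      intro w hw
      have hw' : ‖w - 1‖ = a/2 := by rwa [Metric.mem_sphere, dist_eq_norm] at hw
      have hwle : ‖w - 1‖ ≤ a/2 + 1 := by rw [hw']; linarith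
      calc ‖gbinomC (-w) (n-1) * Complex.log ((z+w)/(z+1))‖
          = ‖gbinomC (-w) (n-1)‖ * ‖Complex.log ((z+w)/(z+1))‖ := norm_mul _ _
        _ ≤ a^(n-1) * 6 := mul_le_mul (hpoly w hwle) (hlog w hwle) (norm_nonneg _) (by positivity)
        _ = 6 * a^(n-1) := by ring
    have hcauchy := cauchy_bound hR2 hcl hsphere (r-1)
    -- arithmetic
    have habs : ‖z‖ = a := rfl
    have hnorm_rhs : ‖‖z‖ ^ ((n:ℤ) - r)‖ = a ^ ((n:ℤ) - r) := by
      rw [habs, Real.norm_eq_abs, _root_.abs_of_nonneg (zpow_nonneg ha0.le _)]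
    have hkey : ((r-1).factorial : ℝ) * (6 * a^(n-1)) / (a/2)^(r-1)
        = (((r-1).factorial : ℝ) * 6 * 2^(r-1)) * a ^ ((n:ℤ) - r) := by
      have hzpow : a ^ ((n:ℤ) - r) = a^(n-1) / a^(r-1) := by
        rw [← zpow_natCast a (n-1), ← zpow_natCast a (r-1), ← zpow_sub₀ (ne_of_gt ha0)]
        congr 1
        omega
      rw [hzpow, div_pow]
      have h2 : ((2:ℝ))^(r-1) ≠ 0 := by positivity
      have ha' : a^(r-1) ≠ 0 := by positivity
      field_simp
    calc ‖FclC n (r-1) z‖ = ‖iteratedDeriv (r-1) f 1‖ := by rw [htrans]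
      _ ≤ ((r-1).factorial : ℝ) * (6 * a^(n-1)) / (a/2)^(r-1) := hcauchy
      _ = (((r-1).factorial : ℝ) * 6 * 2^(r-1)) * a ^ ((n:ℤ) - r) := hkey
      _ = (((r-1).factorial : ℝ) * 6 * 2^(r-1)) * ‖‖z‖ ^ ((n:ℤ) - r)‖ := by
          rw [hnorm_rhs]
  exact key.mono inf_le_left


end
end

section
/- Fix an integer n ≥ 1. For every z ∈ ℂ that is not a negative integer, the infinite product ∏_{k=1}^∞ (1+z/k)^{-binom(-k,n-1)} · exp(Φ_n(z,k)) converges absolutely (i.e. Σ_{k=1}^∞ | -binom(-k,n-1)·Log(1+z/k) + Φ_n(z,k) | < ∞), where Φ_n(z,k) := (1/(n-1)!)·Σ_{μ=-1}^{n-2} ( Σ_{r=μ+1}^{n-1} (s_{n-1,r}/(r-μ))·z^{r-μ} )·(-1)^{μ+1}·k^{μ}. -/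
open Filter Topology

noncomputable section

/-- `binom(-k, m) = (-1)^m · C(k+m-1, m)`, the (integer) value of the generalized binomial
coefficient at a negative integer `-k` (for `k ≥ 1`). -/
def negBinom (k m : ℕ) : ℤ := (-1) ^ m * (Nat.choose (k + m - 1) m : ℤ)

/-- The Stirling numbers of the first kind `s_{n,r}`, the coefficients of
`u(u-1)⋯(u-n+1) = Σ_{r=0}^n s_{n,r}·u^r`. -/
def stirlingFirst (n r : ℕ) : ℤ := (descPochhammer ℤ n).coeff r

/-- `Φ_n(z,k) = (1/(n-1)!)·Σ_{μ=-1}^{n-2} (Σ_{r=μ+1}^{n-1} (s_{n-1,r}/(r-μ))·z^{r-μ})·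
(-1)^{μ+1}·k^μ` (the summation index `μ` is encoded as `i - 1` with `i : ℕ`, `0 ≤ i ≤ n-1`). -/
def PhiW (n : ℕ) (z : ℂ) (k : ℕ) : ℂ :=
  (1 / ((n - 1).factorial : ℂ)) * ∑ i ∈ Finset.range n,
    (∑ r ∈ Finset.Icc i (n - 1),
        ((stirlingFirst (n - 1) r : ℤ) : ℂ) / ((r - i + 1 : ℕ) : ℂ) * z ^ (r - i + 1)) *
      (-1 : ℂ) ^ i * (k : ℂ) ^ ((i : ℤ) - 1)

namespace WeierstrassAux

open Complex Finset

/-- The "polynomial part": `Σ_{m=0}^{r} (-1)^m z^{m+1}/(m+1) · k^{r-m-1}`. -/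
def Qt (z : ℂ) (r k : ℕ) : ℂ :=
  ∑ m ∈ Finset.range (r + 1),
    (-1 : ℂ) ^ m * z ^ (m + 1) / ((m : ℂ) + 1) * (k : ℂ) ^ ((r : ℤ) - ((m : ℤ) + 1))

lemma descPoch_eval_neg (k m : ℕ) :
    (descPochhammer ℤ m).eval (-((k : ℤ) + 1)) = negBinom (k + 1) m * (m.factorial : ℤ) := by
  have h1 := ascPochhammer_eval_neg_eq_descPochhammer ℤ (-((k : ℤ) + 1)) m
  rw [neg_neg] at h1
  have h2 : (ascPochhammer ℤ m).eval ((k : ℤ) + 1) = ((k + 1).ascFactorial m : ℤ) := by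
    have h := ascPochhammer_eval_cast (S := ℤ) m (k + 1)
    rw [ascPochhammer_nat_eq_ascFactorial] at h
    push_cast at h ⊢
    exact h.symm
  have h3 : (k + 1).ascFactorial m = m.factorial * (k + m).choose m :=
    Nat.ascFactorial_eq_factorial_mul_choose k m
  have hsq : (-1 : ℤ) ^ m * (-1 : ℤ) ^ m = 1 := by
    rw [← pow_add]; exact Even.neg_one_pow ⟨m, rfl⟩
  have key : (-1 : ℤ) ^ m * (descPochhammer ℤ m).eval (-((k : ℤ) + 1))
      = ((k + 1).ascFactorial m : ℤ) := by rw [← h2, ← h1]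
  have : (descPochhammer ℤ m).eval (-((k : ℤ) + 1))
      = (-1 : ℤ) ^ m * ((k + 1).ascFactorial m : ℤ) := by
    rw [← key, ← mul_assoc, hsq, one_mul]
  rw [this, h3, negBinom]
  have : k + 1 + m - 1 = k + m := by omega
  rw [this]; push_cast; ring

lemma negBinom_cast (n k : ℕ) (hn : 1 ≤ n) :
    ((negBinom (k + 1) (n - 1) : ℤ) : ℂ) = (1 / ((n - 1).factorial : ℂ)) *
      ∑ r ∈ Finset.range n,
        ((stirlingFirst (n - 1) r : ℤ) : ℂ) * (-1 : ℂ) ^ r * ((k : ℂ) + 1) ^ r := by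
  have hdeg : (descPochhammer ℤ (n - 1)).natDegree < n := by
    rw [descPochhammer_natDegree]; omega
  have hev := Polynomial.eval_eq_sum_range' hdeg (-((k : ℤ) + 1))
  rw [descPoch_eval_neg k (n - 1)] at hev
  have hfac : ((n - 1).factorial : ℂ) ≠ 0 := by
    exact_mod_cast Nat.cast_ne_zero.mpr (Nat.factorial_ne_zero _)
  rw [div_mul_eq_mul_div, eq_div_iff hfac, mul_comm, one_mul]
  have hC := congrArg (fun x : ℤ => (x : ℂ)) hev
  push_cast at hC
  calc ((n - 1).factorial : ℂ) * ((negBinom (k + 1) (n - 1) : ℤ) : ℂ)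
      = ∑ r ∈ Finset.range n,
          (((descPochhammer ℤ (n - 1)).coeff r : ℤ) : ℂ) * (-((k : ℂ) + 1)) ^ r := by
        rw [mul_comm]; exact hC
    _ = ∑ r ∈ Finset.range n,
          ((stirlingFirst (n - 1) r : ℤ) : ℂ) * (-1 : ℂ) ^ r * ((k : ℂ) + 1) ^ r := by
        refine Finset.sum_congr rfl fun r _ => ?_
        rw [stirlingFirst]
        have hneg : (-((k : ℂ) + 1)) ^ r = (-1 : ℂ) ^ r * ((k : ℂ) + 1) ^ r := by
          rw [← neg_one_mul, mul_pow]
        rw [hneg]; ring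

lemma PhiW_eq (n : ℕ) (hn : 1 ≤ n) (z : ℂ) (k : ℕ) :
    PhiW n z k = (1 / ((n - 1).factorial : ℂ)) *
      ∑ r ∈ Finset.range n,
        ((stirlingFirst (n - 1) r : ℤ) : ℂ) * (-1 : ℂ) ^ r * Qt z r k := by
  rw [PhiW]
  congr 1
  simp only [Finset.sum_mul]
  rw [Finset.sum_comm' (t' := Finset.range n) (s' := fun r => Finset.range (r + 1))
    (by intro i r; simp only [Finset.mem_range, Finset.mem_Icc]; omega)]
  apply Finset.sum_congr rfl
  intro r hr
  rw [← Finset.sum_range_reflect]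
  rw [Qt, Finset.mul_sum]
  apply Finset.sum_congr rfl
  intro m hm
  have hmr : m ≤ r := by simpa using Nat.lt_succ_iff.mp (Finset.mem_range.mp hm)
  have e1 : r + 1 - 1 - m = r - m := by omega
  rw [e1]
  have e2 : r - (r - m) + 1 = m + 1 := by omega
  rw [e2]
  have e3 : (-1 : ℂ) ^ (r - m) = (-1 : ℂ) ^ r * (-1 : ℂ) ^ m := by
    have h : (-1 : ℂ) ^ (r - m) * (-1 : ℂ) ^ m = (-1 : ℂ) ^ r := by
      rw [← pow_add]; congr 1; omega
    have hsq : (-1 : ℂ) ^ m * (-1 : ℂ) ^ m = 1 := by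
      rw [← pow_add]; exact Even.neg_one_pow ⟨m, rfl⟩
    calc (-1 : ℂ) ^ (r - m) = (-1 : ℂ) ^ (r - m) * ((-1 : ℂ) ^ m * (-1 : ℂ) ^ m) := by
          rw [hsq, mul_one]
      _ = ((-1 : ℂ) ^ (r - m) * (-1 : ℂ) ^ m) * (-1 : ℂ) ^ m := by ring
      _ = (-1 : ℂ) ^ r * (-1 : ℂ) ^ m := by rw [h]
  rw [e3]
  have e4 : ((r - m : ℕ) : ℤ) - 1 = (r : ℤ) - ((m : ℤ) + 1) := by
    have : ((r - m : ℕ) : ℤ) = (r : ℤ) - (m : ℤ) := by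
      push_cast [hmr]; ring
    omega
  rw [e4]
  push_cast
  ring

lemma main_eq (n : ℕ) (hn : 1 ≤ n) (z : ℂ) (k : ℕ) :
    -((negBinom (k + 1) (n - 1) : ℤ) : ℂ) * Complex.log (1 + z / ((k : ℂ) + 1)) +
        PhiW n z (k + 1)
      = (1 / ((n - 1).factorial : ℂ)) * ∑ r ∈ Finset.range n,
          ((stirlingFirst (n - 1) r : ℤ) : ℂ) * (-1 : ℂ) ^ r *
            (Qt z r (k + 1) - ((k : ℂ) + 1) ^ r * Complex.log (1 + z / ((k : ℂ) + 1))) := by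
  rw [negBinom_cast n k hn, PhiW_eq n hn z (k + 1)]
  simp only [mul_sub, Finset.sum_sub_distrib, mul_sub]
  have hS : ∑ r ∈ Finset.range n, ((stirlingFirst (n - 1) r : ℤ) : ℂ) * (-1 : ℂ) ^ r *
        (((k : ℂ) + 1) ^ r * Complex.log (1 + z / ((k : ℂ) + 1)))
      = (∑ r ∈ Finset.range n,
          ((stirlingFirst (n - 1) r : ℤ) : ℂ) * (-1 : ℂ) ^ r * ((k : ℂ) + 1) ^ r) *
        Complex.log (1 + z / ((k : ℂ) + 1)) := by
    rw [Finset.sum_mul]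
    exact Finset.sum_congr rfl fun r _ => by ring
  rw [hS]
  ring

lemma Qt_sub (z : ℂ) (r k : ℕ) (hk : (k : ℂ) ≠ 0) :
    Qt z r k = (k : ℂ) ^ r * Complex.logTaylor (r + 2) (z / (k : ℂ)) := by
  rw [Complex.logTaylor, Qt, Finset.mul_sum]
  conv_rhs => rw [show r + 2 = (r + 1) + 1 from rfl, Finset.sum_range_succ']
  simp only [pow_zero, Nat.cast_zero, CharP.cast_eq_zero, div_zero, mul_zero, add_zero,
    mul_one]
  apply Finset.sum_congr rfl
  intro m _
  have h1 : (-1 : ℂ) ^ (m + 1 + 1) = (-1 : ℂ) ^ m := by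
    rw [pow_succ, pow_succ]; ring
  rw [h1]
  have h2 : (k : ℂ) ^ ((r : ℤ) - ((m : ℤ) + 1)) = (k : ℂ) ^ r / (k : ℂ) ^ (m + 1) := by
    rw [zpow_sub₀ hk]
    norm_cast
  rw [h2, div_pow]
  have hkp : (k : ℂ) ^ (m + 1) ≠ 0 := pow_ne_zero _ hk
  push_cast
  field_simp

lemma Qt_bound (z : ℂ) (r k : ℕ) (hk1 : 1 ≤ k) (hk : 2 * ‖z‖ ≤ (k : ℝ)) :
    ‖Qt z r k - (k : ℂ) ^ r * Complex.log (1 + z / (k : ℂ))‖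
      ≤ 2 * ‖z‖ ^ (r + 2) / (k : ℝ) ^ 2 := by
  have hk0 : (0 : ℝ) < (k : ℝ) := by exact_mod_cast hk1
  have hkc : (k : ℂ) ≠ 0 := by
    simpa using (by omega : k ≠ 0)
  set w : ℂ := z / (k : ℂ) with hw
  have hwn : ‖w‖ = ‖z‖ / (k : ℝ) := by
    rw [hw, norm_div, Complex.norm_natCast]
  have hwhalf : ‖w‖ ≤ 1 / 2 := by
    rw [hwn, div_le_div_iff₀ hk0 (by norm_num : (0:ℝ) < 2)]
    linarith
  have hwlt : ‖w‖ < 1 := lt_of_le_of_lt hwhalf (by norm_num)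
  rw [Qt_sub z r k hkc, ← mul_sub, norm_mul, norm_pow, Complex.norm_natCast, norm_sub_rev]
  have hb := Complex.norm_log_sub_logTaylor_le (r + 1) hwlt
  push_cast at hb
  have hb2 : ‖Complex.log (1 + w) - Complex.logTaylor (r + 1 + 1) w‖
      ≤ ‖w‖ ^ (r + 2) * 2 := by
    refine hb.trans ?_
    have h1 : (1 - ‖w‖)⁻¹ ≤ 2 := by
      rw [inv_le_comm₀ (by linarith) (by norm_num)]
      linarith
    have h2 : (1 : ℝ) ≤ ((r : ℝ) + 1 + 1) := by
      have : (0 : ℝ) ≤ (r : ℝ) := Nat.cast_nonneg r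
      linarith
    calc ‖w‖ ^ (r + 1 + 1) * (1 - ‖w‖)⁻¹ / ((r : ℝ) + 1 + 1)
        ≤ ‖w‖ ^ (r + 1 + 1) * 2 / 1 := by
          gcongr <;> positivity
      _ = ‖w‖ ^ (r + 2) * 2 := by norm_num
  calc (k : ℝ) ^ r * ‖Complex.log (1 + w) - Complex.logTaylor (r + 1 + 1) w‖
      ≤ (k : ℝ) ^ r * (‖w‖ ^ (r + 2) * 2) := by
        gcongr <;> positivity
    _ = 2 * ‖z‖ ^ (r + 2) / (k : ℝ) ^ 2 := by
        rw [hwn, div_pow]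
        rw [show r + 2 = r + 2 from rfl]
        have : (k : ℝ) ^ (r + 2) = (k : ℝ) ^ r * (k : ℝ) ^ 2 := by rw [pow_add]
        rw [this]
        field_simp

lemma summable_base : Summable (fun k : ℕ => 1 / ((k : ℝ) + 1) ^ 2) := by
  have h0 : Summable (fun n : ℕ => 1 / (n : ℝ) ^ 2) :=
    Real.summable_one_div_nat_pow.mpr one_lt_two
  have h1 := (summable_nat_add_iff (f := fun n : ℕ => 1 / (n : ℝ) ^ 2) 1).mpr h0
  refine h1.congr fun n => ?_
  push_cast
  ring_nf

lemma summable_row (z : ℂ) (r : ℕ) :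
    Summable (fun k : ℕ =>
      ‖Qt z r (k + 1) - ((k : ℂ) + 1) ^ r * Complex.log (1 + z / ((k : ℂ) + 1))‖) := by
  set K := ⌈2 * ‖z‖⌉₊ with hK
  rw [← summable_nat_add_iff K]
  have hcmp : Summable (fun k : ℕ => 2 * ‖z‖ ^ (r + 2) * (1 / ((k : ℝ) + 1) ^ 2)) :=
    summable_base.mul_left _
  refine Summable.of_nonneg_of_le (fun k => norm_nonneg _) (fun k => ?_) hcmp
  have hle : 2 * ‖z‖ ≤ ((k + K + 1 : ℕ) : ℝ) := by
    have h1 : 2 * ‖z‖ ≤ (K : ℝ) := Nat.le_ceil _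
    have h2 : (K : ℝ) ≤ ((k + K + 1 : ℕ) : ℝ) := by
      push_cast; linarith [Nat.cast_nonneg (α := ℝ) k]
    linarith
  have hb := Qt_bound z r (k + K + 1) (by omega) hle
  have hcast : (((k + K + 1 : ℕ) : ℂ)) = ((k + K : ℕ) : ℂ) + 1 := by push_cast; ring
  rw [hcast] at hb
  refine hb.trans ?_
  rw [mul_one_div]
  have hkk : ((k : ℝ) + 1) ≤ ((k + K + 1 : ℕ) : ℝ) := by
    push_cast; linarith [Nat.cast_nonneg (α := ℝ) K]
  gcongr <;> first
    | positivity
    | linarith [Nat.cast_nonneg (α := ℝ) k, Nat.cast_nonneg (α := ℝ) K]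

end WeierstrassAux

/-- For `n ≥ 1` and `z` not a negative integer, the infinite product
`∏_{k=1}^∞ (1+z/k)^{-binom(-k,n-1)}·exp(Φ_n(z,k))` converges absolutely, i.e.
`Σ_{k=1}^∞ |−binom(-k,n-1)·Log(1+z/k) + Φ_n(z,k)| < ∞`. -/
theorem weierstrass_product_summable (n : ℕ) (hn : 1 ≤ n) (z : ℂ)
    (hz : ∀ m : ℤ, m < 0 → z ≠ (m : ℂ)) :
    Summable (fun k : ℕ =>
      ‖-((negBinom (k + 1) (n - 1) : ℤ) : ℂ) * Complex.log (1 + z / ((k : ℂ) + 1)) +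
        PhiW n z (k + 1)‖) := by
  classical
  have hmaj : Summable (fun k : ℕ => ‖(1 / ((n - 1).factorial : ℂ))‖ *
      ∑ r ∈ Finset.range n, ‖((stirlingFirst (n - 1) r : ℤ) : ℂ) * (-1 : ℂ) ^ r‖ *
        ‖WeierstrassAux.Qt z r (k + 1) - ((k : ℂ) + 1) ^ r *
          Complex.log (1 + z / ((k : ℂ) + 1))‖) := by
    refine Summable.mul_left _ ?_
    refine summable_sum fun r _ => ?_
    exact (WeierstrassAux.summable_row z r).mul_left _
  refine Summable.of_nonneg_of_le (fun k => norm_nonneg _) (fun k => ?_) hmaj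
  rw [WeierstrassAux.main_eq n hn z k, norm_mul]
  refine mul_le_mul_of_nonneg_left ?_ (norm_nonneg _)
  refine (norm_sum_le _ _).trans (Finset.sum_le_sum fun r _ => ?_)
  rw [norm_mul]

end
end
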